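/- There exists no finite simple graph on a nonempty vertex set that is 6-regular and in which the subgraph induced by the open neighbourhood of every vertex has exactly 11 edges; that is, no (6,11)-constant graph exists. -/

import Mathlib

set_option linter.unusedSectionVars false
set_option linter.unusedVariables false
open SimpleGraph Finset

/-- The number of edges of the subgraph of `G` induced by the open
neighbourhood of the vertex `v` (the quantity `e(v)`). -/
noncomputable def nbhdEdgeCount {V : Type*} (G : SimpleGraph V) (v : V) : ℕ :=
  Nat.card (SimpleGraph.induce (G.neighborSet v) G).edgeSet

namespace NoSixEleven
variable {V : Type} [Fintype V] [DecidableEq V] (G : SimpleGraph V) [DecidableRel G.Adj]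

def cc (v u : V) : ℕ := ((G.neighborFinset v).filter (fun y => y ≠ u ∧ ¬ G.Adj u y)).card

variable {G}

lemma adj_of_mem {a b : V} (h : b ∈ G.neighborFinset a) : G.Adj a b :=
  (SimpleGraph.mem_neighborFinset _ _ _).1 h

lemma mem_of_adj {a b : V} (h : G.Adj a b) : b ∈ G.neighborFinset a :=
  (SimpleGraph.mem_neighborFinset _ _ _).2 h

lemma mem_symm {a b : V} (h : b ∈ G.neighborFinset a) : a ∈ G.neighborFinset b :=
  mem_of_adj (adj_of_mem h).symm

lemma nadj_symm {a b : V} (h : ¬ G.Adj a b) : ¬ G.Adj b a := fun h' => h h'.symm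

lemma nadj_of_not_mem {a b : V} (h : b ∉ G.neighborFinset a) : ¬ G.Adj a b :=
  fun h' => h (mem_of_adj h')

lemma not_mem_self (v : V) : v ∉ G.neighborFinset v := by simp

lemma cc_ge1 {w u p : V} (h1 : p ∈ G.neighborFinset w) (hp : p ≠ u) (hap : ¬G.Adj u p) :
    1 ≤ cc G w u := by
  refine Finset.card_pos.2 ⟨p, ?_⟩
  simp [cc, mem_filter, h1, hp, hap]

lemma cc_ge2 {w u p q : V} (h1 : p ∈ G.neighborFinset w) (h2 : q ∈ G.neighborFinset w)
    (hpq : p ≠ q) (hp : p ≠ u) (hq : q ≠ u) (hap : ¬G.Adj u p) (haq : ¬G.Adj u q) :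
    2 ≤ cc G w u := by
  have hsub : ({p, q} : Finset V) ⊆
      (G.neighborFinset w).filter (fun y => y ≠ u ∧ ¬ G.Adj u y) := by
    intro x hx
    simp only [mem_insert, mem_singleton] at hx
    rcases hx with rfl | rfl <;> simp [mem_filter, h1, h2, hp, hq, hap, haq]
  calc 2 = ({p, q} : Finset V).card := by
        rw [Finset.card_insert_of_notMem (by simp [hpq]), Finset.card_singleton]
    _ ≤ _ := Finset.card_le_card hsub

lemma cc_ge3 {w u p q r : V} (h1 : p ∈ G.neighborFinset w) (h2 : q ∈ G.neighborFinset w)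
    (h3 : r ∈ G.neighborFinset w)
    (hpq : p ≠ q) (hpr : p ≠ r) (hqr : q ≠ r) (hp : p ≠ u) (hq : q ≠ u) (hr : r ≠ u)
    (hap : ¬G.Adj u p) (haq : ¬G.Adj u q) (har : ¬G.Adj u r) :
    3 ≤ cc G w u := by
  have hsub : ({p, q, r} : Finset V) ⊆
      (G.neighborFinset w).filter (fun y => y ≠ u ∧ ¬ G.Adj u y) := by
    intro x hx
    simp only [mem_insert, mem_singleton] at hx
    rcases hx with rfl | rfl | rfl <;> simp [mem_filter, h1, h2, h3, hp, hq, hr, hap, haq, har]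
  calc 3 = ({p, q, r} : Finset V).card := by
        rw [Finset.card_insert_of_notMem (by simp [hpq, hpr]),
          Finset.card_insert_of_notMem (by simp [hqr]), Finset.card_singleton]
    _ ≤ _ := Finset.card_le_card hsub

lemma adj_of_cc_zero {w u y : V} (h0 : cc G w u = 0) (hy : y ∈ G.neighborFinset w)
    (hyu : y ≠ u) : G.Adj u y := by
  by_contra h
  have := cc_ge1 hy hyu h
  omega

lemma adj_of_cc_one {w a u y : V} (h1 : cc G w a = 1) (hu : u ∈ G.neighborFinset w)
    (hua : u ≠ a) (hnadj : ¬ G.Adj a u) (hy : y ∈ G.neighborFinset w) (hya : y ≠ a)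
    (hyu : y ≠ u) : G.Adj a y := by
  by_contra h
  have := cc_ge2 hu hy (Ne.symm hyu) hua hya hnadj h
  omega

lemma adj_of_cc_two {w a u1 u2 y : V} (h2 : cc G w a = 2) (hu1 : u1 ∈ G.neighborFinset w)
    (hu2 : u2 ∈ G.neighborFinset w) (h12 : u1 ≠ u2) (hu1a : u1 ≠ a) (hu2a : u2 ≠ a)
    (hn1 : ¬ G.Adj a u1) (hn2 : ¬ G.Adj a u2) (hy : y ∈ G.neighborFinset w) (hya : y ≠ a)
    (hyu1 : y ≠ u1) (hyu2 : y ≠ u2) : G.Adj a y := by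
  by_contra h
  have := cc_ge3 hu1 hu2 hy h12 (Ne.symm hyu1) (Ne.symm hyu2) hu1a hu2a hya hn1 hn2 h
  omega

lemma pair_other {s : Finset V} (h2 : s.card = 2) {y : V} (hy : y ∈ s) :
    ∃ a, a ≠ y ∧ s = {y, a} := by
  obtain ⟨t1, t2, ht, hseq⟩ := Finset.card_eq_two.1 h2
  rw [hseq] at hy
  simp only [Finset.mem_insert, Finset.mem_singleton] at hy
  rcases hy with rfl | rfl
  · exact ⟨t2, Ne.symm ht, hseq⟩
  · refine ⟨t1, ht, ?_⟩
    rw [hseq]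
    ext z
    simp only [Finset.mem_insert, Finset.mem_singleton]
    tauto

lemma sum_le8 {w : V} (h8 : ∑ x ∈ G.neighborFinset w, cc G w x = 8)
    {S : Finset V} (hS : S ⊆ G.neighborFinset w) : ∑ x ∈ S, cc G w x ≤ 8 :=
  h8 ▸ Finset.sum_le_sum_of_subset hS

lemma filter_partition {v u : V} (hv : (G.neighborFinset v).card = 6) (hu : u ∈ G.neighborFinset v) :
    (G.neighborFinset u ∩ G.neighborFinset v).card + cc G v u = 5 := by
  have h1 : ((G.neighborFinset v).erase u).filter (fun y => G.Adj u y) =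
      G.neighborFinset u ∩ G.neighborFinset v := by
    ext y
    simp only [mem_filter, mem_erase, mem_inter, mem_neighborFinset]
    constructor
    · rintro ⟨⟨hy1, hy2⟩, hy3⟩; exact ⟨hy3, hy2⟩
    · rintro ⟨h1, h2⟩; exact ⟨⟨fun h => G.irrefl (h ▸ h1), h2⟩, h1⟩
  have h2 : ((G.neighborFinset v).erase u).filter (fun y => ¬ G.Adj u y) =
      (G.neighborFinset v).filter (fun y => y ≠ u ∧ ¬ G.Adj u y) := by
    ext y
    simp only [mem_filter, mem_erase]
    tauto
  have h3 := Finset.card_filter_add_card_filter_not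
    (s := (G.neighborFinset v).erase u) (p := fun y => G.Adj u y)
  rw [h1, h2] at h3
  have h4 : ((G.neighborFinset v).erase u).card = 5 := by
    rw [Finset.card_erase_of_mem hu, hv]
  rw [h4] at h3
  unfold cc
  omega

lemma out_card {v u : V} (hv : (G.neighborFinset v).card = 6)
    (hu6 : (G.neighborFinset u).card = 6) (hu : u ∈ G.neighborFinset v) :
    (G.neighborFinset u \ insert v (G.neighborFinset v)).card = cc G v u := by
  have hpart := Finset.card_inter_add_card_sdiff (G.neighborFinset u) (insert v (G.neighborFinset v))
  have hin : G.neighborFinset u ∩ insert v (G.neighborFinset v) =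
      insert v (G.neighborFinset u ∩ G.neighborFinset v) := by
    ext y
    simp only [mem_inter, mem_insert, mem_neighborFinset] at *
    constructor
    · rintro ⟨h1, h2 | h2⟩
      · exact Or.inl h2
      · exact Or.inr ⟨h1, h2⟩
    · rintro (rfl | ⟨h1, h2⟩)
      · exact ⟨G.adj_symm hu, Or.inl rfl⟩
      · exact ⟨h1, Or.inr h2⟩
  have hvnot : v ∉ G.neighborFinset u ∩ G.neighborFinset v := by
    simp [mem_inter, mem_neighborFinset]
  rw [hin, Finset.card_insert_of_notMem hvnot] at hpart
  have := filter_partition hv hu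
  rw [hu6] at hpart
  omega

lemma out_facts {v u x : V} (hx : x ∈ G.neighborFinset u \ insert v (G.neighborFinset v)) :
    x ∈ G.neighborFinset u ∧ x ≠ v ∧ x ∉ G.neighborFinset v := by
  simp only [mem_sdiff, mem_insert, not_or] at hx
  tauto

lemma caseI (hdeg6 : ∀ w : V, (G.neighborFinset w).card = 6)
    (hsum8 : ∀ w : V, ∑ x ∈ G.neighborFinset w, cc G w x = 8)
    {v u : V} (hu : u ∈ G.neighborFinset v) (hcu0 : cc G v u = 0) : False := by
  -- u is adjacent to everything in N v except itself
  have hadj_u : ∀ y ∈ G.neighborFinset v, y ≠ u → G.Adj u y :=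
    fun y hy hyu => adj_of_cc_zero hcu0 hy hyu
  -- N u ⊆ insert v (N v)
  have huout : G.neighborFinset u \ insert v (G.neighborFinset v) = ∅ := by
    rw [← Finset.card_eq_zero, out_card (hdeg6 v) (hdeg6 u) hu, hcu0]
  have hNu_sub : ∀ x ∈ G.neighborFinset u, x ∈ insert v (G.neighborFinset v) := by
    intro x hx
    by_contra hxx
    have : x ∈ G.neighborFinset u \ insert v (G.neighborFinset v) := by
      simp [mem_sdiff, hx, hxx]
    rw [huout] at this
    exact absurd this (Finset.notMem_empty x)
  -- every w in N v \ {u} has cc G v w ≤ 2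
  have hle2 : ∀ w ∈ (G.neighborFinset v).erase u, cc G v w ≤ 2 := by
    intro w hw
    obtain ⟨hwu, hwv⟩ := Finset.mem_erase.1 hw
    by_contra hgt
    have h3 : 3 ≤ (G.neighborFinset w \ insert v (G.neighborFinset v)).card := by
      rw [out_card (hdeg6 v) (hdeg6 w) hwv]; omega
    obtain ⟨t, ht_sub, ht_card⟩ := Finset.exists_subset_card_eq h3
    obtain ⟨p1, p2, p3, h12, h13, h23, rfl⟩ := Finset.card_eq_three.1 ht_card
    obtain ⟨hp1w, hp1v, hp1Nv⟩ := out_facts (ht_sub (by simp : p1 ∈ ({p1, p2, p3} : Finset V)))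
    obtain ⟨hp2w, hp2v, hp2Nv⟩ := out_facts (ht_sub (by simp : p2 ∈ ({p1, p2, p3} : Finset V)))
    obtain ⟨hp3w, hp3v, hp3Nv⟩ := out_facts (ht_sub (by simp : p3 ∈ ({p1, p2, p3} : Finset V)))
    -- basic non-adjacency facts
    have hnv1 : ¬ G.Adj v p1 := nadj_of_not_mem hp1Nv
    have hnv2 : ¬ G.Adj v p2 := nadj_of_not_mem hp2Nv
    have hnv3 : ¬ G.Adj v p3 := nadj_of_not_mem hp3Nv
    have hnu1 : ¬ G.Adj u p1 := fun h => by
      have := hNu_sub p1 (mem_of_adj h)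
      simp only [Finset.mem_insert] at this
      rcases this with h' | h'
      · exact hp1v h'
      · exact hp1Nv h'
    have hnu2 : ¬ G.Adj u p2 := fun h => by
      have := hNu_sub p2 (mem_of_adj h)
      simp only [Finset.mem_insert] at this
      rcases this with h' | h'
      · exact hp2v h'
      · exact hp2Nv h'
    have hnu3 : ¬ G.Adj u p3 := fun h => by
      have := hNu_sub p3 (mem_of_adj h)
      simp only [Finset.mem_insert] at this
      rcases this with h' | h'
      · exact hp3v h'
      · exact hp3Nv h'
    -- memberships in N w
    have hvw : v ∈ G.neighborFinset w := mem_symm hwv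
    have huw : u ∈ G.neighborFinset w := mem_of_adj ((hadj_u w hwv hwu).symm)
    -- distinctness
    have hvu : v ≠ u := G.ne_of_adj (adj_of_mem hu)
    have hp1u : p1 ≠ u := fun h => hp1Nv (by rw [h]; exact hu)
    have hp2u : p2 ≠ u := fun h => hp2Nv (by rw [h]; exact hu)
    have hp3u : p3 ≠ u := fun h => hp3Nv (by rw [h]; exact hu)
    -- the five-element subset of N w
    have hsub : ({v, u, p1, p2, p3} : Finset V) ⊆ G.neighborFinset w := by
      intro x hx
      simp only [mem_insert, mem_singleton] at hx
      rcases hx with rfl | rfl | rfl | rfl | rfl <;> assumption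
    have hsum := sum_le8 (hsum8 w) hsub
    rw [Finset.sum_insert (by simp [hvu, Ne.symm hp1v, Ne.symm hp2v, Ne.symm hp3v]),
      Finset.sum_insert (by simp [Ne.symm hp1u, Ne.symm hp2u, Ne.symm hp3u]),
      Finset.sum_insert (by simp [h12, h13]),
      Finset.sum_insert (by simp [h23]), Finset.sum_singleton] at hsum
    have b1 : 3 ≤ cc G w v := cc_ge3 hp1w hp2w hp3w h12 h13 h23 hp1v hp2v hp3v hnv1 hnv2 hnv3
    have b2 : 3 ≤ cc G w u := cc_ge3 hp1w hp2w hp3w h12 h13 h23 hp1u hp2u hp3u hnu1 hnu2 hnu3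
    have b3 : 2 ≤ cc G w p1 := cc_ge2 hvw huw hvu (Ne.symm hp1v) (Ne.symm hp1u)
      (nadj_symm hnv1) (nadj_symm hnu1)
    have b4 : 2 ≤ cc G w p2 := cc_ge2 hvw huw hvu (Ne.symm hp2v) (Ne.symm hp2u)
      (nadj_symm hnv2) (nadj_symm hnu2)
    have b5 : 2 ≤ cc G w p3 := cc_ge2 hvw huw hvu (Ne.symm hp3v) (Ne.symm hp3u)
      (nadj_symm hnv3) (nadj_symm hnu3)
    omega
  -- abbreviations
  have hvu : v ≠ u := G.ne_of_adj (adj_of_mem hu)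
  -- find w in N v \ {u} with cc G v w = 2
  have herase5 : ((G.neighborFinset v).erase u).card = 5 := by
    rw [Finset.card_erase_of_mem hu, hdeg6 v]
  have hsum_er : ∑ x ∈ (G.neighborFinset v).erase u, cc G v x = 8 := by
    have h := Finset.sum_erase_add (G.neighborFinset v) (cc G v) hu
    rw [hcu0, hsum8 v] at h
    omega
  obtain ⟨w, hw, hw2⟩ : ∃ w ∈ (G.neighborFinset v).erase u, 2 ≤ cc G v w := by
    by_contra hall
    push_neg at hall
    have hle : ∑ x ∈ (G.neighborFinset v).erase u, cc G v x ≤ ((G.neighborFinset v).erase u).card • 1 :=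
      Finset.sum_le_card_nsmul _ _ 1 (fun x hx => by have := hall x hx; omega)
    rw [herase5, smul_eq_mul] at hle
    omega
  obtain ⟨hwu, hwv⟩ := Finset.mem_erase.1 hw
  have hcw2 : cc G v w = 2 := le_antisymm (hle2 w hw) hw2
  have hwvne : w ≠ v := ne_of_mem_of_not_mem hwv (not_mem_self v)
  have hvw : v ∈ G.neighborFinset w := mem_symm hwv
  have huw : u ∈ G.neighborFinset w := mem_of_adj ((hadj_u w hwv hwu).symm)
  -- the two outside neighbours of w
  have hout2 : (G.neighborFinset w \ insert v (G.neighborFinset v)).card = 2 := by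
    rw [out_card (hdeg6 v) (hdeg6 w) hwv, hcw2]
  obtain ⟨p1, p2, hp12, houteq⟩ := Finset.card_eq_two.1 hout2
  have hp1o : p1 ∈ G.neighborFinset w \ insert v (G.neighborFinset v) := by rw [houteq]; simp
  have hp2o : p2 ∈ G.neighborFinset w \ insert v (G.neighborFinset v) := by rw [houteq]; simp
  obtain ⟨hp1w, hp1v, hp1Nv⟩ := out_facts hp1o
  obtain ⟨hp2w, hp2v, hp2Nv⟩ := out_facts hp2o
  have hnv1 : ¬ G.Adj v p1 := nadj_of_not_mem hp1Nv
  have hnv2 : ¬ G.Adj v p2 := nadj_of_not_mem hp2Nv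
  have hp1u : p1 ≠ u := fun h => hp1Nv (by rw [h]; exact hu)
  have hp2u : p2 ≠ u := fun h => hp2Nv (by rw [h]; exact hu)
  have hnu1 : ¬ G.Adj u p1 := fun h => by
    have := hNu_sub p1 (mem_of_adj h)
    simp only [Finset.mem_insert] at this
    rcases this with h' | h'
    · exact hp1v h'
    · exact hp1Nv h'
  have hnu2 : ¬ G.Adj u p2 := fun h => by
    have := hNu_sub p2 (mem_of_adj h)
    simp only [Finset.mem_insert] at this
    rcases this with h' | h'
    · exact hp2v h'
    · exact hp2Nv h'
  have hp1wne : p1 ≠ w := ne_of_mem_of_not_mem hp1w (not_mem_self w)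
  have hp2wne : p2 ≠ w := ne_of_mem_of_not_mem hp2w (not_mem_self w)
  -- the two common neighbours s, s'
  have hinter3 : (G.neighborFinset w ∩ G.neighborFinset v).card = 3 := by
    have := filter_partition (hdeg6 v) hwv
    omega
  have huinter : u ∈ (G.neighborFinset w ∩ G.neighborFinset v) := Finset.mem_inter.2 ⟨huw, hu⟩
  have h2' : (((G.neighborFinset w ∩ G.neighborFinset v)).erase u).card = 2 := by
    rw [Finset.card_erase_of_mem huinter, hinter3]
  obtain ⟨s, s', hss', hset⟩ := Finset.card_eq_two.1 h2'
  have hsmem : s ∈ ((G.neighborFinset w ∩ G.neighborFinset v)).erase u := by rw [hset]; simp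
  have hs'mem : s' ∈ ((G.neighborFinset w ∩ G.neighborFinset v)).erase u := by rw [hset]; simp
  obtain ⟨hsu, hsin⟩ := Finset.mem_erase.1 hsmem
  obtain ⟨hs'u, hs'in⟩ := Finset.mem_erase.1 hs'mem
  obtain ⟨hsw, hsv⟩ := Finset.mem_inter.1 hsin
  obtain ⟨hs'w, hs'v⟩ := Finset.mem_inter.1 hs'in
  -- distinctness
  have hsvne : s ≠ v := ne_of_mem_of_not_mem hsv (not_mem_self v)
  have hs'vne : s' ≠ v := ne_of_mem_of_not_mem hs'v (not_mem_self v)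
  have hswne : s ≠ w := ne_of_mem_of_not_mem hsw (not_mem_self w)
  have hs'wne : s' ≠ w := ne_of_mem_of_not_mem hs'w (not_mem_self w)
  have hsp1 : s ≠ p1 := ne_of_mem_of_not_mem hsv hp1Nv
  have hsp2 : s ≠ p2 := ne_of_mem_of_not_mem hsv hp2Nv
  have hs'p1 : s' ≠ p1 := ne_of_mem_of_not_mem hs'v hp1Nv
  have hs'p2 : s' ≠ p2 := ne_of_mem_of_not_mem hs'v hp2Nv
  -- N w = {v, u, s, s', p1, p2}
  have hsubNw : ({v, u, s, s', p1, p2} : Finset V) ⊆ G.neighborFinset w := by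
    intro x hx
    simp only [Finset.mem_insert, Finset.mem_singleton] at hx
    rcases hx with rfl | rfl | rfl | rfl | rfl | rfl <;> assumption
  have hcard6 : ({v, u, s, s', p1, p2} : Finset V).card = 6 := by
    rw [Finset.card_insert_of_notMem (by simp [hvu, Ne.symm hsvne, Ne.symm hs'vne, Ne.symm hp1v, Ne.symm hp2v]),
      Finset.card_insert_of_notMem (by simp [Ne.symm hsu, Ne.symm hs'u, Ne.symm hp1u, Ne.symm hp2u]),
      Finset.card_insert_of_notMem (by simp [hss', hsp1, hsp2]),
      Finset.card_insert_of_notMem (by simp [hs'p1, hs'p2]),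
      Finset.card_insert_of_notMem (by simp [hp12]), Finset.card_singleton]
  have hNw : G.neighborFinset w = {v, u, s, s', p1, p2} :=
    (Finset.eq_of_subset_of_card_le hsubNw (by rw [hdeg6 w, hcard6])).symm
  -- sum over N w
  have hsumw : cc G w v + cc G w u + cc G w s + cc G w s' + cc G w p1 + cc G w p2 = 8 := by
    have h := hsum8 w
    rw [hNw,
      Finset.sum_insert (by simp [hvu, Ne.symm hsvne, Ne.symm hs'vne, Ne.symm hp1v, Ne.symm hp2v]),
      Finset.sum_insert (by simp [Ne.symm hsu, Ne.symm hs'u, Ne.symm hp1u, Ne.symm hp2u]),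
      Finset.sum_insert (by simp [hss', hsp1, hsp2]),
      Finset.sum_insert (by simp [hs'p1, hs'p2]),
      Finset.sum_insert (by simp [hp12]), Finset.sum_singleton] at h
    omega
  have bwv : 2 ≤ cc G w v := cc_ge2 hp1w hp2w hp12 hp1v hp2v hnv1 hnv2
  have bwu : 2 ≤ cc G w u := cc_ge2 hp1w hp2w hp12 hp1u hp2u hnu1 hnu2
  have bwp1 : 2 ≤ cc G w p1 := cc_ge2 hvw huw hvu (Ne.symm hp1v) (Ne.symm hp1u)
    (nadj_symm hnv1) (nadj_symm hnu1)
  have bwp2 : 2 ≤ cc G w p2 := cc_ge2 hvw huw hvu (Ne.symm hp2v) (Ne.symm hp2u)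
    (nadj_symm hnv2) (nadj_symm hnu2)
  have hcs0 : cc G w s = 0 := by omega
  have hcs'0 : cc G w s' = 0 := by omega
  have hcp1 : cc G w p1 = 2 := by omega
  -- N s and N s'
  have hsubNs : ({v, u, w, s', p1, p2} : Finset V) ⊆ G.neighborFinset s := by
    intro x hx
    simp only [Finset.mem_insert, Finset.mem_singleton] at hx
    rcases hx with rfl | rfl | rfl | rfl | rfl | rfl
    · exact mem_symm hsv
    · exact mem_of_adj (adj_of_cc_zero hcs0 huw (Ne.symm hsu))
    · exact mem_symm hsw
    · exact mem_of_adj (adj_of_cc_zero hcs0 hs'w (Ne.symm hss'))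
    · exact mem_of_adj (adj_of_cc_zero hcs0 hp1w (Ne.symm hsp1))
    · exact mem_of_adj (adj_of_cc_zero hcs0 hp2w (Ne.symm hsp2))
  have hcard6s : ({v, u, w, s', p1, p2} : Finset V).card = 6 := by
    rw [Finset.card_insert_of_notMem (by simp [hvu, Ne.symm hwvne, Ne.symm hs'vne, Ne.symm hp1v, Ne.symm hp2v]),
      Finset.card_insert_of_notMem (by simp [Ne.symm hwu, Ne.symm hs'u, Ne.symm hp1u, Ne.symm hp2u]),
      Finset.card_insert_of_notMem (by simp [Ne.symm hs'wne, Ne.symm hp1wne, Ne.symm hp2wne]),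
      Finset.card_insert_of_notMem (by simp [hs'p1, hs'p2]),
      Finset.card_insert_of_notMem (by simp [hp12]), Finset.card_singleton]
  have hNs : G.neighborFinset s = {v, u, w, s', p1, p2} :=
    (Finset.eq_of_subset_of_card_le hsubNs (by rw [hdeg6 s, hcard6s])).symm
  have hsubNs' : ({v, u, w, s, p1, p2} : Finset V) ⊆ G.neighborFinset s' := by
    intro x hx
    simp only [Finset.mem_insert, Finset.mem_singleton] at hx
    rcases hx with rfl | rfl | rfl | rfl | rfl | rfl
    · exact mem_symm hs'v
    · exact mem_of_adj (adj_of_cc_zero hcs'0 huw (Ne.symm hs'u))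
    · exact mem_symm hs'w
    · exact mem_of_adj (adj_of_cc_zero hcs'0 hsw hss')
    · exact mem_of_adj (adj_of_cc_zero hcs'0 hp1w (Ne.symm hs'p1))
    · exact mem_of_adj (adj_of_cc_zero hcs'0 hp2w (Ne.symm hs'p2))
  have hcard6s' : ({v, u, w, s, p1, p2} : Finset V).card = 6 := by
    rw [Finset.card_insert_of_notMem (by simp [hvu, Ne.symm hwvne, Ne.symm hsvne, Ne.symm hp1v, Ne.symm hp2v]),
      Finset.card_insert_of_notMem (by simp [Ne.symm hwu, Ne.symm hsu, Ne.symm hp1u, Ne.symm hp2u]),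
      Finset.card_insert_of_notMem (by simp [Ne.symm hswne, Ne.symm hp1wne, Ne.symm hp2wne]),
      Finset.card_insert_of_notMem (by simp [hsp1, hsp2]),
      Finset.card_insert_of_notMem (by simp [hp12]), Finset.card_singleton]
  have hNs' : G.neighborFinset s' = {v, u, w, s, p1, p2} :=
    (Finset.eq_of_subset_of_card_le hsubNs' (by rw [hdeg6 s', hcard6s'])).symm
  -- forced adjacencies of p1 inside N w
  have hadj_p1 : ∀ y ∈ G.neighborFinset w, y ≠ p1 → y ≠ v → y ≠ u → G.Adj p1 y := by
    intro y hy hyp hyv hyu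
    by_contra hna
    have := cc_ge3 hvw huw hy hvu (Ne.symm hyv) (Ne.symm hyu)
      (Ne.symm hp1v) (Ne.symm hp1u) hyp (nadj_symm hnv1) (nadj_symm hnu1) hna
    omega
  have hp1s : G.Adj p1 s := hadj_p1 s hsw hsp1 hsvne hsu
  have hp1s' : G.Adj p1 s' := hadj_p1 s' hs'w hs'p1 hs'vne hs'u
  -- outside neighbours of p1 (w.r.t. w)
  have houtp1 : (G.neighborFinset p1 \ insert w (G.neighborFinset w)).card = 2 := by
    rw [out_card (hdeg6 w) (hdeg6 p1) hp1w, hcp1]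
  obtain ⟨q1, q2, hq12, houtp1eq⟩ := Finset.card_eq_two.1 houtp1
  have hq1o : q1 ∈ G.neighborFinset p1 \ insert w (G.neighborFinset w) := by rw [houtp1eq]; simp
  have hq2o : q2 ∈ G.neighborFinset p1 \ insert w (G.neighborFinset w) := by rw [houtp1eq]; simp
  obtain ⟨hq1p1, hq1w, hq1Nw⟩ := out_facts hq1o
  obtain ⟨hq2p1, hq2w, hq2Nw⟩ := out_facts hq2o
  have hq1Nw' : q1 ∉ ({v, u, s, s', p1, p2} : Finset V) := hNw ▸ hq1Nw
  have hq2Nw' : q2 ∉ ({v, u, s, s', p1, p2} : Finset V) := hNw ▸ hq2Nw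
  simp only [Finset.mem_insert, Finset.mem_singleton, not_or] at hq1Nw' hq2Nw'
  obtain ⟨hq1v, hq1u, hq1s, hq1s', hq1p, hq1p2⟩ := hq1Nw'
  obtain ⟨hq2v, hq2u, hq2s, hq2s', hq2p, hq2p2⟩ := hq2Nw'
  have hnadjwq1 : ¬ G.Adj w q1 := nadj_of_not_mem hq1Nw
  have hnadjwq2 : ¬ G.Adj w q2 := nadj_of_not_mem hq2Nw
  have hnadjsq1 : ¬ G.Adj s q1 := fun h => by
    have hm : q1 ∈ G.neighborFinset s := mem_of_adj h
    rw [hNs] at hm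
    simp only [Finset.mem_insert, Finset.mem_singleton] at hm
    rcases hm with h' | h' | h' | h' | h' | h'
    · exact hq1v h'
    · exact hq1u h'
    · exact hq1w h'
    · exact hq1s' h'
    · exact hq1p h'
    · exact hq1p2 h'
  have hnadjsq2 : ¬ G.Adj s q2 := fun h => by
    have hm : q2 ∈ G.neighborFinset s := mem_of_adj h
    rw [hNs] at hm
    simp only [Finset.mem_insert, Finset.mem_singleton] at hm
    rcases hm with h' | h' | h' | h' | h' | h'
    · exact hq2v h'
    · exact hq2u h'
    · exact hq2w h'
    · exact hq2s' h'
    · exact hq2p h'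
    · exact hq2p2 h'
  have hnadjs'q1 : ¬ G.Adj s' q1 := fun h => by
    have hm : q1 ∈ G.neighborFinset s' := mem_of_adj h
    rw [hNs'] at hm
    simp only [Finset.mem_insert, Finset.mem_singleton] at hm
    rcases hm with h' | h' | h' | h' | h' | h'
    · exact hq1v h'
    · exact hq1u h'
    · exact hq1w h'
    · exact hq1s h'
    · exact hq1p h'
    · exact hq1p2 h'
  have hnadjs'q2 : ¬ G.Adj s' q2 := fun h => by
    have hm : q2 ∈ G.neighborFinset s' := mem_of_adj h
    rw [hNs'] at hm
    simp only [Finset.mem_insert, Finset.mem_singleton] at hm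
    rcases hm with h' | h' | h' | h' | h' | h'
    · exact hq2v h'
    · exact hq2u h'
    · exact hq2w h'
    · exact hq2s h'
    · exact hq2p h'
    · exact hq2p2 h'
  -- memberships in N p1
  have hwp1m : w ∈ G.neighborFinset p1 := mem_symm hp1w
  have hsp1m : s ∈ G.neighborFinset p1 := mem_of_adj hp1s
  have hs'p1m : s' ∈ G.neighborFinset p1 := mem_of_adj hp1s'
  -- final contradiction at p1
  have hsubp1 : ({w, s, s', q1, q2} : Finset V) ⊆ G.neighborFinset p1 := by
    intro x hx
    simp only [Finset.mem_insert, Finset.mem_singleton] at hx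
    rcases hx with rfl | rfl | rfl | rfl | rfl <;> assumption
  have hsump1 := sum_le8 (hsum8 p1) hsubp1
  have hwq1 : w ≠ q1 := Ne.symm hq1w
  have hwq2 : w ≠ q2 := Ne.symm hq2w
  have hsq1 : s ≠ q1 := Ne.symm hq1s
  have hsq2 : s ≠ q2 := Ne.symm hq2s
  have hs'q1 : s' ≠ q1 := Ne.symm hq1s'
  have hs'q2 : s' ≠ q2 := Ne.symm hq2s'
  rw [Finset.sum_insert (by simp [Ne.symm hswne, Ne.symm hs'wne, hwq1, hwq2]),
    Finset.sum_insert (by simp [hss', hsq1, hsq2]),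
    Finset.sum_insert (by simp [hs'q1, hs'q2]),
    Finset.sum_insert (by simp [hq12]), Finset.sum_singleton] at hsump1
  have c1 : 2 ≤ cc G p1 w := cc_ge2 hq1p1 hq2p1 hq12 hq1w hq2w hnadjwq1 hnadjwq2
  have c2 : 2 ≤ cc G p1 s := cc_ge2 hq1p1 hq2p1 hq12 hq1s hq2s hnadjsq1 hnadjsq2
  have c3 : 2 ≤ cc G p1 s' := cc_ge2 hq1p1 hq2p1 hq12 hq1s' hq2s' hnadjs'q1 hnadjs'q2
  have c4 : 3 ≤ cc G p1 q1 := cc_ge3 hwp1m hsp1m hs'p1m (Ne.symm hswne) (Ne.symm hs'wne) hss'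
    hwq1 hsq1 hs'q1
    (nadj_symm hnadjwq1) (nadj_symm hnadjsq1) (nadj_symm hnadjs'q1)
  have c5 : 3 ≤ cc G p1 q2 := cc_ge3 hwp1m hsp1m hs'p1m (Ne.symm hswne) (Ne.symm hs'wne) hss'
    hwq2 hsq2 hs'q2
    (nadj_symm hnadjwq2) (nadj_symm hnadjsq2) (nadj_symm hnadjs'q2)
  omega


lemma caseA (hdeg6 : ∀ w : V, (G.neighborFinset w).card = 6)
    (hsum8 : ∀ w : V, ∑ x ∈ G.neighborFinset w, cc G w x = 8)
    {v u : V} (hu : u ∈ G.neighborFinset v) (hcu3 : cc G v u = 3)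
    (hones : ∀ y ∈ G.neighborFinset v, y ≠ u → cc G v y = 1) : False := by
  have hvu : v ≠ u := G.ne_of_adj (adj_of_mem hu)
  -- T = the three non-neighbours of u in N v
  have hT3 : ((G.neighborFinset v).filter (fun y => y ≠ u ∧ ¬ G.Adj u y)).card = 3 := hcu3
  obtain ⟨a, b, c, hab, hac, hbc, hTeq⟩ := Finset.card_eq_three.1 hT3
  have haT : a ∈ (G.neighborFinset v).filter (fun y => y ≠ u ∧ ¬ G.Adj u y) := by rw [hTeq]; simp
  have hbT : b ∈ (G.neighborFinset v).filter (fun y => y ≠ u ∧ ¬ G.Adj u y) := by rw [hTeq]; simp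
  have hcT : c ∈ (G.neighborFinset v).filter (fun y => y ≠ u ∧ ¬ G.Adj u y) := by rw [hTeq]; simp
  obtain ⟨hav, hau, hnua⟩ : a ∈ G.neighborFinset v ∧ a ≠ u ∧ ¬ G.Adj u a := by
    simpa using haT
  obtain ⟨hbv, hbu, hnub⟩ : b ∈ G.neighborFinset v ∧ b ≠ u ∧ ¬ G.Adj u b := by
    simpa using hbT
  obtain ⟨hcv, hcu, hnuc⟩ : c ∈ G.neighborFinset v ∧ c ≠ u ∧ ¬ G.Adj u c := by
    simpa using hcT
  -- D = the remaining two vertices d, e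
  have hTsub : (G.neighborFinset v).filter (fun y => y ≠ u ∧ ¬ G.Adj u y) ⊆
      (G.neighborFinset v).erase u := by
    intro x hx
    simp only [mem_filter] at hx
    exact Finset.mem_erase.2 ⟨hx.2.1, hx.1⟩
  have herase5 : ((G.neighborFinset v).erase u).card = 5 := by
    rw [Finset.card_erase_of_mem hu, hdeg6 v]
  have hD2 : (((G.neighborFinset v).erase u) \
      ((G.neighborFinset v).filter (fun y => y ≠ u ∧ ¬ G.Adj u y))).card = 2 := by
    rw [Finset.card_sdiff_of_subset hTsub, herase5, hT3]
  obtain ⟨d, e, hde, hDeq⟩ := Finset.card_eq_two.1 hD2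
  have hdD : d ∈ ((G.neighborFinset v).erase u) \
      ((G.neighborFinset v).filter (fun y => y ≠ u ∧ ¬ G.Adj u y)) := by rw [hDeq]; simp
  have heD : e ∈ ((G.neighborFinset v).erase u) \
      ((G.neighborFinset v).filter (fun y => y ≠ u ∧ ¬ G.Adj u y)) := by rw [hDeq]; simp
  have hdv : d ∈ G.neighborFinset v := (Finset.mem_erase.1 (Finset.mem_sdiff.1 hdD).1).2
  have hev : e ∈ G.neighborFinset v := (Finset.mem_erase.1 (Finset.mem_sdiff.1 heD).1).2
  have hdu : d ≠ u := (Finset.mem_erase.1 (Finset.mem_sdiff.1 hdD).1).1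
  have heu : e ≠ u := (Finset.mem_erase.1 (Finset.mem_sdiff.1 heD).1).1
  have hadjud : G.Adj u d := by
    have := (Finset.mem_sdiff.1 hdD).2
    simp only [mem_filter, not_and, not_not] at this
    exact this hdv hdu
  have hadjue : G.Adj u e := by
    have := (Finset.mem_sdiff.1 heD).2
    simp only [mem_filter, not_and, not_not] at this
    exact this hev heu
  have hda : d ≠ a := by
    rintro rfl
    exact (Finset.mem_sdiff.1 hdD).2 haT
  have hdb : d ≠ b := by
    rintro rfl
    exact (Finset.mem_sdiff.1 hdD).2 hbT
  have hdc : d ≠ c := by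
    rintro rfl
    exact (Finset.mem_sdiff.1 hdD).2 hcT
  have hea : e ≠ a := by
    rintro rfl
    exact (Finset.mem_sdiff.1 heD).2 haT
  have heb : e ≠ b := by
    rintro rfl
    exact (Finset.mem_sdiff.1 heD).2 hbT
  have hec : e ≠ c := by
    rintro rfl
    exact (Finset.mem_sdiff.1 heD).2 hcT
  -- N v = {u, a, b, c, d, e}
  have hsubNv : ({u, a, b, c, d, e} : Finset V) ⊆ G.neighborFinset v := by
    intro x hx
    simp only [Finset.mem_insert, Finset.mem_singleton] at hx
    rcases hx with rfl | rfl | rfl | rfl | rfl | rfl <;> assumption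
  have hcardNv : ({u, a, b, c, d, e} : Finset V).card = 6 := by
    rw [Finset.card_insert_of_notMem (by simp [Ne.symm hau, Ne.symm hbu, Ne.symm hcu, Ne.symm hdu, Ne.symm heu]),
      Finset.card_insert_of_notMem (by simp [hab, hac, Ne.symm hda, Ne.symm hea]),
      Finset.card_insert_of_notMem (by simp [hbc, Ne.symm hdb, Ne.symm heb]),
      Finset.card_insert_of_notMem (by simp [Ne.symm hdc, Ne.symm hec]),
      Finset.card_insert_of_notMem (by simp [hde]), Finset.card_singleton]
  have hNv : G.neighborFinset v = {u, a, b, c, d, e} :=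
    (Finset.eq_of_subset_of_card_le hsubNv (by rw [hdeg6 v, hcardNv])).symm
  -- a, b, c are adjacent to d and to e
  have hnau : ¬ G.Adj a u := nadj_symm hnua
  have hnbu : ¬ G.Adj b u := nadj_symm hnub
  have hncu : ¬ G.Adj c u := nadj_symm hnuc
  have hadjad : G.Adj a d := adj_of_cc_one (hones a hav hau) hu (Ne.symm hau) hnau hdv hda hdu
  have hadjae : G.Adj a e := adj_of_cc_one (hones a hav hau) hu (Ne.symm hau) hnau hev hea heu
  have hadjbd : G.Adj b d := adj_of_cc_one (hones b hbv hbu) hu (Ne.symm hbu) hnbu hdv hdb hdu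
  have hadjbe : G.Adj b e := adj_of_cc_one (hones b hbv hbu) hu (Ne.symm hbu) hnbu hev heb heu
  have hadjcd : G.Adj c d := adj_of_cc_one (hones c hcv hcu) hu (Ne.symm hcu) hncu hdv hdc hdu
  have hadjce : G.Adj c e := adj_of_cc_one (hones c hcv hcu) hu (Ne.symm hcu) hncu hev hec heu
  -- d is not adjacent to e
  have hnde : ¬ G.Adj d e := by
    have hd1 : cc G v d = 1 := hones d hdv hdu
    obtain ⟨x, hxeq⟩ := Finset.card_eq_one.1 hd1
    have hx : x ∈ (G.neighborFinset v).filter (fun y => y ≠ d ∧ ¬ G.Adj d y) := by rw [hxeq]; simp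
    obtain ⟨hxv, hxd, hnd⟩ : x ∈ G.neighborFinset v ∧ x ≠ d ∧ ¬ G.Adj d x := by simpa using hx
    have hxe : x = e := by
      have : x ∈ ({u, a, b, c, d, e} : Finset V) := hNv ▸ hxv
      simp only [Finset.mem_insert, Finset.mem_singleton] at this
      rcases this with rfl | rfl | rfl | rfl | rfl | rfl
      · exact absurd hadjud.symm hnd
      · exact absurd hadjad.symm hnd
      · exact absurd hadjbd.symm hnd
      · exact absurd hadjcd.symm hnd
      · exact absurd rfl hxd
      · rfl
    intro hadj
    rw [hxe] at hnd
    exact hnd hadj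
  -- outside neighbours of u
  have hout3 : (G.neighborFinset u \ insert v (G.neighborFinset v)).card = 3 := by
    rw [out_card (hdeg6 v) (hdeg6 u) hu, hcu3]
  obtain ⟨p1, p2, p3, h12, h13, h23, houteq⟩ := Finset.card_eq_three.1 hout3
  obtain ⟨hp1u, hp1v, hp1Nv⟩ := out_facts (houteq ▸ (by simp : p1 ∈ ({p1, p2, p3} : Finset V)) :
    p1 ∈ G.neighborFinset u \ insert v (G.neighborFinset v))
  obtain ⟨hp2u, hp2v, hp2Nv⟩ := out_facts (houteq ▸ (by simp : p2 ∈ ({p1, p2, p3} : Finset V)) :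
    p2 ∈ G.neighborFinset u \ insert v (G.neighborFinset v))
  obtain ⟨hp3u, hp3v, hp3Nv⟩ := out_facts (houteq ▸ (by simp : p3 ∈ ({p1, p2, p3} : Finset V)) :
    p3 ∈ G.neighborFinset u \ insert v (G.neighborFinset v))
  have hnv1 : ¬ G.Adj v p1 := nadj_of_not_mem hp1Nv
  have hnv2 : ¬ G.Adj v p2 := nadj_of_not_mem hp2Nv
  have hnv3 : ¬ G.Adj v p3 := nadj_of_not_mem hp3Nv
  have hp1d : p1 ≠ d := fun h => hp1Nv (h ▸ hdv)
  have hp2d : p2 ≠ d := fun h => hp2Nv (h ▸ hdv)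
  have hp3d : p3 ≠ d := fun h => hp3Nv (h ▸ hdv)
  have hp1e : p1 ≠ e := fun h => hp1Nv (h ▸ hev)
  have hp2e : p2 ≠ e := fun h => hp2Nv (h ▸ hev)
  have hp3e : p3 ≠ e := fun h => hp3Nv (h ▸ hev)
  -- N u = {v, d, e, p1, p2, p3}
  have hvu' : v ∈ G.neighborFinset u := mem_symm hu
  have hdu' : d ∈ G.neighborFinset u := mem_of_adj hadjud
  have heu' : e ∈ G.neighborFinset u := mem_of_adj hadjue
  have hdvne : d ≠ v := ne_of_mem_of_not_mem hdv (not_mem_self v)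
  have hevne : e ≠ v := ne_of_mem_of_not_mem hev (not_mem_self v)
  have hsubNu : ({v, d, e, p1, p2, p3} : Finset V) ⊆ G.neighborFinset u := by
    intro x hx
    simp only [Finset.mem_insert, Finset.mem_singleton] at hx
    rcases hx with rfl | rfl | rfl | rfl | rfl | rfl <;> assumption
  have hcardNu : ({v, d, e, p1, p2, p3} : Finset V).card = 6 := by
    rw [Finset.card_insert_of_notMem (by simp [Ne.symm hdvne, Ne.symm hevne, Ne.symm hp1v, Ne.symm hp2v, Ne.symm hp3v]),
      Finset.card_insert_of_notMem (by simp [hde, Ne.symm hp1d, Ne.symm hp2d, Ne.symm hp3d]),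
      Finset.card_insert_of_notMem (by simp [Ne.symm hp1e, Ne.symm hp2e, Ne.symm hp3e]),
      Finset.card_insert_of_notMem (by simp [h12, h13]),
      Finset.card_insert_of_notMem (by simp [h23]), Finset.card_singleton]
  have hNu : G.neighborFinset u = {v, d, e, p1, p2, p3} :=
    (Finset.eq_of_subset_of_card_le hsubNu (by rw [hdeg6 u, hcardNu])).symm
  -- sum over N u
  have hsumu : cc G u v + cc G u d + cc G u e + cc G u p1 + cc G u p2 + cc G u p3 = 8 := by
    have h := hsum8 u
    rw [hNu,
      Finset.sum_insert (by simp [Ne.symm hdvne, Ne.symm hevne, Ne.symm hp1v, Ne.symm hp2v, Ne.symm hp3v]),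
      Finset.sum_insert (by simp [hde, Ne.symm hp1d, Ne.symm hp2d, Ne.symm hp3d]),
      Finset.sum_insert (by simp [Ne.symm hp1e, Ne.symm hp2e, Ne.symm hp3e]),
      Finset.sum_insert (by simp [h12, h13]),
      Finset.sum_insert (by simp [h23]), Finset.sum_singleton] at h
    omega
  have hp1mem : p1 ∈ G.neighborFinset u := hp1u
  have buv : 3 ≤ cc G u v := cc_ge3 hp1u hp2u hp3u h12 h13 h23 hp1v hp2v hp3v hnv1 hnv2 hnv3
  have bud : 1 ≤ cc G u d := cc_ge1 heu' (Ne.symm hde) hnde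
  have bue : 1 ≤ cc G u e := cc_ge1 hdu' hde (nadj_symm hnde)
  have bup1 : 1 ≤ cc G u p1 := cc_ge1 hvu' (Ne.symm hp1v) (nadj_symm hnv1)
  have bup2 : 1 ≤ cc G u p2 := cc_ge1 hvu' (Ne.symm hp2v) (nadj_symm hnv2)
  have bup3 : 1 ≤ cc G u p3 := cc_ge1 hvu' (Ne.symm hp3v) (nadj_symm hnv3)
  have hcud1 : cc G u d = 1 := by omega
  -- d is adjacent to p1, p2, p3
  have hadjdp1 : G.Adj d p1 := adj_of_cc_one hcud1 heu' (Ne.symm hde) hnde hp1u hp1d hp1e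
  have hadjdp2 : G.Adj d p2 := adj_of_cc_one hcud1 heu' (Ne.symm hde) hnde hp2u hp2d hp2e
  have hadjdp3 : G.Adj d p3 := adj_of_cc_one hcud1 heu' (Ne.symm hde) hnde hp3u hp3d hp3e
  -- contradiction: d has at least 8 neighbours
  have hp1a : p1 ≠ a := fun h => hp1Nv (h ▸ hav)
  have hp2a : p2 ≠ a := fun h => hp2Nv (h ▸ hav)
  have hp3a : p3 ≠ a := fun h => hp3Nv (h ▸ hav)
  have hp1b : p1 ≠ b := fun h => hp1Nv (h ▸ hbv)
  have hp2b : p2 ≠ b := fun h => hp2Nv (h ▸ hbv)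
  have hp3b : p3 ≠ b := fun h => hp3Nv (h ▸ hbv)
  have hp1c : p1 ≠ c := fun h => hp1Nv (h ▸ hcv)
  have hp2c : p2 ≠ c := fun h => hp2Nv (h ▸ hcv)
  have hp3c : p3 ≠ c := fun h => hp3Nv (h ▸ hcv)
  have hp1uu : p1 ≠ u := fun h => hp1Nv (h ▸ hu)
  have hp2uu : p2 ≠ u := fun h => hp2Nv (h ▸ hu)
  have hp3uu : p3 ≠ u := fun h => hp3Nv (h ▸ hu)
  have havne : a ≠ v := ne_of_mem_of_not_mem hav (not_mem_self v)
  have hbvne : b ≠ v := ne_of_mem_of_not_mem hbv (not_mem_self v)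
  have hcvne : c ≠ v := ne_of_mem_of_not_mem hcv (not_mem_self v)
  have huvne : u ≠ v := Ne.symm hvu
  have hsubNd : ({v, u, a, b, c, p1, p2, p3} : Finset V) ⊆ G.neighborFinset d := by
    intro x hx
    simp only [Finset.mem_insert, Finset.mem_singleton] at hx
    rcases hx with rfl | rfl | rfl | rfl | rfl | rfl | rfl | rfl
    · exact mem_symm hdv
    · exact mem_of_adj hadjud.symm
    · exact mem_of_adj hadjad.symm
    · exact mem_of_adj hadjbd.symm
    · exact mem_of_adj hadjcd.symm
    · exact mem_of_adj hadjdp1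
    · exact mem_of_adj hadjdp2
    · exact mem_of_adj hadjdp3
  have hcard8 : ({v, u, a, b, c, p1, p2, p3} : Finset V).card = 8 := by
    rw [Finset.card_insert_of_notMem (by simp [hvu, Ne.symm havne, Ne.symm hbvne, Ne.symm hcvne, Ne.symm hp1v, Ne.symm hp2v, Ne.symm hp3v]),
      Finset.card_insert_of_notMem (by simp [Ne.symm hau, Ne.symm hbu, Ne.symm hcu, Ne.symm hp1uu, Ne.symm hp2uu, Ne.symm hp3uu]),
      Finset.card_insert_of_notMem (by simp [hab, hac, Ne.symm hp1a, Ne.symm hp2a, Ne.symm hp3a]),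
      Finset.card_insert_of_notMem (by simp [hbc, Ne.symm hp1b, Ne.symm hp2b, Ne.symm hp3b]),
      Finset.card_insert_of_notMem (by simp [Ne.symm hp1c, Ne.symm hp2c, Ne.symm hp3c]),
      Finset.card_insert_of_notMem (by simp [h12, h13]),
      Finset.card_insert_of_notMem (by simp [h23]), Finset.card_singleton]
  have := Finset.card_le_card hsubNd
  rw [hcard8, hdeg6 d] at this
  omega

lemma caseB2 (hdeg6 : ∀ w : V, (G.neighborFinset w).card = 6)
    (hsum8 : ∀ w : V, ∑ x ∈ G.neighborFinset w, cc G w x = 8)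
    {v x y : V} (hx : x ∈ G.neighborFinset v) (hy : y ∈ G.neighborFinset v) (hxy : x ≠ y)
    (hcx2 : cc G v x = 2) (hcy2 : cc G v y = 2)
    (hones : ∀ z ∈ G.neighborFinset v, z ≠ x → z ≠ y → cc G v z = 1)
    (hnxy : ¬ G.Adj x y) : False := by
  have hyfx : y ∈ (G.neighborFinset v).filter (fun t => t ≠ x ∧ ¬ G.Adj x t) := by
    simp [mem_filter, hy, Ne.symm hxy, hnxy]
  obtain ⟨a, hay, hfxeq⟩ := pair_other hcx2 hyfx
  have hafx : a ∈ (G.neighborFinset v).filter (fun t => t ≠ x ∧ ¬ G.Adj x t) := by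
    rw [hfxeq]; simp
  obtain ⟨hav, hax, hnxa⟩ : a ∈ G.neighborFinset v ∧ a ≠ x ∧ ¬ G.Adj x a := by simpa using hafx
  have hnyx : ¬ G.Adj y x := nadj_symm hnxy
  have hxfy : x ∈ (G.neighborFinset v).filter (fun t => t ≠ y ∧ ¬ G.Adj y t) := by
    simp [mem_filter, hx, hxy, hnyx]
  obtain ⟨b, hbx, hfyeq⟩ := pair_other hcy2 hxfy
  have hbfy : b ∈ (G.neighborFinset v).filter (fun t => t ≠ y ∧ ¬ G.Adj y t) := by
    rw [hfyeq]; simp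
  obtain ⟨hbv, hby, hnyb⟩ : b ∈ G.neighborFinset v ∧ b ≠ y ∧ ¬ G.Adj y b := by simpa using hbfy
  -- a ≠ b
  have hab : a ≠ b := by
    rintro rfl
    have := cc_ge2 hx hy hxy (Ne.symm hax) (Ne.symm hay) (nadj_symm hnxa) (nadj_symm hnyb)
    have := hones a hav hax hay
    omega
  -- adjacency helpers for x and y
  have hadjx : ∀ z ∈ G.neighborFinset v, z ≠ x → z ≠ y → z ≠ a → G.Adj x z := by
    intro z hz h1 h2 h3
    by_contra h
    have : z ∈ (G.neighborFinset v).filter (fun t => t ≠ x ∧ ¬ G.Adj x t) :=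
      Finset.mem_filter.2 ⟨hz, h1, h⟩
    rw [hfxeq] at this
    simp only [Finset.mem_insert, Finset.mem_singleton] at this
    tauto
  have hadjy : ∀ z ∈ G.neighborFinset v, z ≠ y → z ≠ x → z ≠ b → G.Adj y z := by
    intro z hz h1 h2 h3
    by_contra h
    have : z ∈ (G.neighborFinset v).filter (fun t => t ≠ y ∧ ¬ G.Adj y t) :=
      Finset.mem_filter.2 ⟨hz, h1, h⟩
    rw [hfyeq] at this
    simp only [Finset.mem_insert, Finset.mem_singleton] at this
    tauto
  -- a and b have cc = 1 and known single non-neighbour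
  have hca1 : cc G v a = 1 := hones a hav hax hay
  have hcb1 : cc G v b = 1 := hones b hbv hbx hby
  have hnax : ¬ G.Adj a x := nadj_symm hnxa
  have hnby : ¬ G.Adj b y := nadj_symm hnyb
  have hadja : ∀ z ∈ G.neighborFinset v, z ≠ a → z ≠ x → G.Adj a z := by
    intro z hz h1 h2
    exact adj_of_cc_one hca1 hx (Ne.symm hax) hnax hz h1 h2
  have hadjb : ∀ z ∈ G.neighborFinset v, z ≠ b → z ≠ y → G.Adj b z := by
    intro z hz h1 h2
    exact adj_of_cc_one hcb1 hy (Ne.symm hby) hnby hz h1 h2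
  -- the remaining two vertices e, f
  have hba : b ≠ a := Ne.symm hab
  have hsub4 : ({x, y, a, b} : Finset V) ⊆ G.neighborFinset v := by
    intro t ht
    simp only [Finset.mem_insert, Finset.mem_singleton] at ht
    rcases ht with rfl | rfl | rfl | rfl <;> assumption
  have hcard4 : ({x, y, a, b} : Finset V).card = 4 := by
    rw [Finset.card_insert_of_notMem (by simp [hxy, Ne.symm hax, Ne.symm hbx]),
      Finset.card_insert_of_notMem (by simp [Ne.symm hay, Ne.symm hby]),
      Finset.card_insert_of_notMem (by simp [hab]), Finset.card_singleton]
  have hD2 : ((G.neighborFinset v) \ ({x, y, a, b} : Finset V)).card = 2 := by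
    rw [Finset.card_sdiff_of_subset hsub4, hdeg6 v, hcard4]
  obtain ⟨e, f, hef, hDeq⟩ := Finset.card_eq_two.1 hD2
  have heD : e ∈ (G.neighborFinset v) \ ({x, y, a, b} : Finset V) := by rw [hDeq]; simp
  have hfD : f ∈ (G.neighborFinset v) \ ({x, y, a, b} : Finset V) := by rw [hDeq]; simp
  obtain ⟨hev, heNot⟩ := Finset.mem_sdiff.1 heD
  obtain ⟨hfv, hfNot⟩ := Finset.mem_sdiff.1 hfD
  simp only [Finset.mem_insert, Finset.mem_singleton, not_or] at heNot hfNot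
  obtain ⟨hex, hey, hea, heb⟩ := heNot
  obtain ⟨hfx, hfy, hfa, hfb⟩ := hfNot
  -- N v = {x, y, a, b, e, f}
  have hsubNv : ({x, y, a, b, e, f} : Finset V) ⊆ G.neighborFinset v := by
    intro t ht
    simp only [Finset.mem_insert, Finset.mem_singleton] at ht
    rcases ht with rfl | rfl | rfl | rfl | rfl | rfl <;> assumption
  have hcardNv : ({x, y, a, b, e, f} : Finset V).card = 6 := by
    rw [Finset.card_insert_of_notMem (by simp [hxy, Ne.symm hax, Ne.symm hbx, Ne.symm hex, Ne.symm hfx]),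
      Finset.card_insert_of_notMem (by simp [Ne.symm hay, Ne.symm hby, Ne.symm hey, Ne.symm hfy]),
      Finset.card_insert_of_notMem (by simp [hab, Ne.symm hea, Ne.symm hfa]),
      Finset.card_insert_of_notMem (by simp [Ne.symm heb, Ne.symm hfb]),
      Finset.card_insert_of_notMem (by simp [hef]), Finset.card_singleton]
  have hNv : G.neighborFinset v = {x, y, a, b, e, f} :=
    (Finset.eq_of_subset_of_card_le hsubNv (by rw [hdeg6 v, hcardNv])).symm
  -- adjacencies of e and f inside N v
  have hadjxe : G.Adj x e := hadjx e hev hex hey hea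
  have hadjxf : G.Adj x f := hadjx f hfv hfx hfy hfa
  have hadjye : G.Adj y e := hadjy e hev hey hex heb
  have hadjyf : G.Adj y f := hadjy f hfv hfy hfx hfb
  have hadjae : G.Adj a e := hadja e hev hea hex
  have hadjaf : G.Adj a f := hadja f hfv hfa hfx
  have hadjbe : G.Adj b e := hadjb e hev heb hey
  have hadjbf : G.Adj b f := hadjb f hfv hfb hfy
  have hadjxb : G.Adj x b := hadjx b hbv hbx hby hba
  have hadjya : G.Adj y a := hadjy a hav hay hax hab
  have hadjab : G.Adj a b := hadja b hbv hba hbx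
  -- ¬ Adj e f
  have hce1 : cc G v e = 1 := hones e hev hex hey
  have hcf1 : cc G v f = 1 := hones f hfv hfx hfy
  have hnef : ¬ G.Adj e f := by
    obtain ⟨t, hteq⟩ := Finset.card_eq_one.1 hce1
    have ht : t ∈ (G.neighborFinset v).filter (fun z => z ≠ e ∧ ¬ G.Adj e z) := by
      rw [hteq]; simp
    obtain ⟨htv, hte, hnet⟩ : t ∈ G.neighborFinset v ∧ t ≠ e ∧ ¬ G.Adj e t := by simpa using ht
    have : t = f := by
      have h6 : t ∈ ({x, y, a, b, e, f} : Finset V) := hNv ▸ htv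
      simp only [Finset.mem_insert, Finset.mem_singleton] at h6
      rcases h6 with rfl | rfl | rfl | rfl | rfl | rfl
      · exact absurd hadjxe.symm hnet
      · exact absurd hadjye.symm hnet
      · exact absurd hadjae.symm hnet
      · exact absurd hadjbe.symm hnet
      · exact absurd rfl hte
      · rfl
    intro hadj
    rw [this] at hnet
    exact hnet hadj
  -- outside neighbour p of e
  have hout1e : (G.neighborFinset e \ insert v (G.neighborFinset v)).card = 1 := by
    rw [out_card (hdeg6 v) (hdeg6 e) hev, hce1]
  obtain ⟨p, hpeq⟩ := Finset.card_eq_one.1 hout1e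
  obtain ⟨hpe, hpv, hpNv⟩ := out_facts (hpeq ▸ (by simp : p ∈ ({p} : Finset V)) :
    p ∈ G.neighborFinset e \ insert v (G.neighborFinset v))
  have hnvp : ¬ G.Adj v p := nadj_of_not_mem hpNv
  have hpx : p ≠ x := fun h => hpNv (h ▸ hx)
  have hpy : p ≠ y := fun h => hpNv (h ▸ hy)
  have hpa : p ≠ a := fun h => hpNv (h ▸ hav)
  have hpb : p ≠ b := fun h => hpNv (h ▸ hbv)
  have hpf : p ≠ f := fun h => hpNv (h ▸ hfv)
  -- N e = {v, x, y, a, b, p}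
  have hevne : e ≠ v := ne_of_mem_of_not_mem hev (not_mem_self v)
  have hxvne : x ≠ v := ne_of_mem_of_not_mem hx (not_mem_self v)
  have hyvne : y ≠ v := ne_of_mem_of_not_mem hy (not_mem_self v)
  have havne : a ≠ v := ne_of_mem_of_not_mem hav (not_mem_self v)
  have hbvne : b ≠ v := ne_of_mem_of_not_mem hbv (not_mem_self v)
  have hfvne : f ≠ v := ne_of_mem_of_not_mem hfv (not_mem_self v)
  have hsubNe : ({v, x, y, a, b, p} : Finset V) ⊆ G.neighborFinset e := by
    intro t ht
    simp only [Finset.mem_insert, Finset.mem_singleton] at ht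
    rcases ht with rfl | rfl | rfl | rfl | rfl | rfl
    · exact mem_symm hev
    · exact mem_of_adj hadjxe.symm
    · exact mem_of_adj hadjye.symm
    · exact mem_of_adj hadjae.symm
    · exact mem_of_adj hadjbe.symm
    · exact hpe
  have hcardNe : ({v, x, y, a, b, p} : Finset V).card = 6 := by
    rw [Finset.card_insert_of_notMem (by simp [Ne.symm hxvne, Ne.symm hyvne, Ne.symm havne, Ne.symm hbvne, Ne.symm hpv]),
      Finset.card_insert_of_notMem (by simp [hxy, Ne.symm hax, Ne.symm hbx, Ne.symm hpx]),
      Finset.card_insert_of_notMem (by simp [Ne.symm hay, Ne.symm hby, Ne.symm hpy]),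
      Finset.card_insert_of_notMem (by simp [hab, Ne.symm hpa]),
      Finset.card_insert_of_notMem (by simp [Ne.symm hpb]), Finset.card_singleton]
  have hNe : G.neighborFinset e = {v, x, y, a, b, p} :=
    (Finset.eq_of_subset_of_card_le hsubNe (by rw [hdeg6 e, hcardNe])).symm
  -- forcing at e
  have hvNe : v ∈ G.neighborFinset e := mem_symm hev
  have hxNe : x ∈ G.neighborFinset e := mem_of_adj hadjxe.symm
  have hyNe : y ∈ G.neighborFinset e := mem_of_adj hadjye.symm
  have haNe : a ∈ G.neighborFinset e := mem_of_adj hadjae.symm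
  have hbNe : b ∈ G.neighborFinset e := mem_of_adj hadjbe.symm
  have hsume : cc G e v + cc G e x + cc G e y + cc G e a + cc G e b + cc G e p = 8 := by
    have h := hsum8 e
    rw [hNe,
      Finset.sum_insert (by simp [Ne.symm hxvne, Ne.symm hyvne, Ne.symm havne, Ne.symm hbvne, Ne.symm hpv]),
      Finset.sum_insert (by simp [hxy, Ne.symm hax, Ne.symm hbx, Ne.symm hpx]),
      Finset.sum_insert (by simp [Ne.symm hay, Ne.symm hby, Ne.symm hpy]),
      Finset.sum_insert (by simp [hab, Ne.symm hpa]),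
      Finset.sum_insert (by simp [Ne.symm hpb]), Finset.sum_singleton] at h
    omega
  have bev : 1 ≤ cc G e v := cc_ge1 hpe hpv hnvp
  have bea : 1 ≤ cc G e a := cc_ge1 hxNe (Ne.symm hax) hnax
  have bex : 2 ≤ cc G e x := cc_ge2 haNe hyNe hay hax (Ne.symm hxy) hnxa hnxy
  have bey : 2 ≤ cc G e y := cc_ge2 hxNe hbNe (Ne.symm hbx) hxy hby hnyx hnyb
  have beb : 1 ≤ cc G e b := cc_ge1 hyNe (Ne.symm hby) hnby
  have bep : 1 ≤ cc G e p := cc_ge1 hvNe (Ne.symm hpv) (nadj_symm hnvp)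
  have hcea : cc G e a = 1 := by omega
  have hceb : cc G e b = 1 := by omega
  have hcex : cc G e x = 2 := by omega
  have hcey : cc G e y = 2 := by omega
  -- forced adjacencies of p
  have hadjap : G.Adj a p := adj_of_cc_one hcea hxNe (Ne.symm hax) hnax hpe hpa hpx
  have hadjbp : G.Adj b p := adj_of_cc_one hceb hyNe (Ne.symm hby) hnby hpe hpb hpy
  have hadjxp : G.Adj x p := adj_of_cc_two hcex haNe hyNe hay hax (Ne.symm hxy)
    hnxa hnxy hpe hpx hpa hpy
  have hadjyp : G.Adj y p := adj_of_cc_two hcey hxNe hbNe (Ne.symm hbx) hxy hby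
    hnyx hnyb hpe hpy hpx hpb
  -- the analogous vertex q for f
  have hout1f : (G.neighborFinset f \ insert v (G.neighborFinset v)).card = 1 := by
    rw [out_card (hdeg6 v) (hdeg6 f) hfv, hcf1]
  obtain ⟨q, hqeq⟩ := Finset.card_eq_one.1 hout1f
  obtain ⟨hqf, hqv, hqNv⟩ := out_facts (hqeq ▸ (by simp : q ∈ ({q} : Finset V)) :
    q ∈ G.neighborFinset f \ insert v (G.neighborFinset v))
  have hnvq : ¬ G.Adj v q := nadj_of_not_mem hqNv
  have hqx : q ≠ x := fun h => hqNv (h ▸ hx)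
  have hqy : q ≠ y := fun h => hqNv (h ▸ hy)
  have hqa : q ≠ a := fun h => hqNv (h ▸ hav)
  have hqb : q ≠ b := fun h => hqNv (h ▸ hbv)
  have hqe : q ≠ e := fun h => hqNv (h ▸ hev)
  have hsubNf : ({v, x, y, a, b, q} : Finset V) ⊆ G.neighborFinset f := by
    intro t ht
    simp only [Finset.mem_insert, Finset.mem_singleton] at ht
    rcases ht with rfl | rfl | rfl | rfl | rfl | rfl
    · exact mem_symm hfv
    · exact mem_of_adj hadjxf.symm
    · exact mem_of_adj hadjyf.symm
    · exact mem_of_adj hadjaf.symm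
    · exact mem_of_adj hadjbf.symm
    · exact hqf
  have hcardNf : ({v, x, y, a, b, q} : Finset V).card = 6 := by
    rw [Finset.card_insert_of_notMem (by simp [Ne.symm hxvne, Ne.symm hyvne, Ne.symm havne, Ne.symm hbvne, Ne.symm hqv]),
      Finset.card_insert_of_notMem (by simp [hxy, Ne.symm hax, Ne.symm hbx, Ne.symm hqx]),
      Finset.card_insert_of_notMem (by simp [Ne.symm hay, Ne.symm hby, Ne.symm hqy]),
      Finset.card_insert_of_notMem (by simp [hab, Ne.symm hqa]),
      Finset.card_insert_of_notMem (by simp [Ne.symm hqb]), Finset.card_singleton]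
  have hNf : G.neighborFinset f = {v, x, y, a, b, q} :=
    (Finset.eq_of_subset_of_card_le hsubNf (by rw [hdeg6 f, hcardNf])).symm
  have hxNf : x ∈ G.neighborFinset f := mem_of_adj hadjxf.symm
  have hyNf : y ∈ G.neighborFinset f := mem_of_adj hadjyf.symm
  have haNf : a ∈ G.neighborFinset f := mem_of_adj hadjaf.symm
  have hbNf : b ∈ G.neighborFinset f := mem_of_adj hadjbf.symm
  have hvNf : v ∈ G.neighborFinset f := mem_symm hfv
  have hsumf : cc G f v + cc G f x + cc G f y + cc G f a + cc G f b + cc G f q = 8 := by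
    have h := hsum8 f
    rw [hNf,
      Finset.sum_insert (by simp [Ne.symm hxvne, Ne.symm hyvne, Ne.symm havne, Ne.symm hbvne, Ne.symm hqv]),
      Finset.sum_insert (by simp [hxy, Ne.symm hax, Ne.symm hbx, Ne.symm hqx]),
      Finset.sum_insert (by simp [Ne.symm hay, Ne.symm hby, Ne.symm hqy]),
      Finset.sum_insert (by simp [hab, Ne.symm hqa]),
      Finset.sum_insert (by simp [Ne.symm hqb]), Finset.sum_singleton] at h
    omega
  have bfv : 1 ≤ cc G f v := cc_ge1 hqf hqv hnvq
  have bfa : 1 ≤ cc G f a := cc_ge1 hxNf (Ne.symm hax) hnax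
  have bfx : 2 ≤ cc G f x := cc_ge2 haNf hyNf hay hax (Ne.symm hxy) hnxa hnxy
  have bfy : 2 ≤ cc G f y := cc_ge2 hxNf hbNf (Ne.symm hbx) hxy hby hnyx hnyb
  have bfb : 1 ≤ cc G f b := cc_ge1 hyNf (Ne.symm hby) hnby
  have bfq : 1 ≤ cc G f q := cc_ge1 hvNf (Ne.symm hqv) (nadj_symm hnvq)
  have hcfa : cc G f a = 1 := by omega
  have hadjaq : G.Adj a q := adj_of_cc_one hcfa hxNf (Ne.symm hax) hnax hqf hqa hqx
  -- p = q via the unique outside neighbour of a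
  have hout1a : (G.neighborFinset a \ insert v (G.neighborFinset v)).card = 1 := by
    rw [out_card (hdeg6 v) (hdeg6 a) hav, hca1]
  have hpq : p = q := by
    obtain ⟨t, hteq⟩ := Finset.card_eq_one.1 hout1a
    have hp' : p ∈ G.neighborFinset a \ insert v (G.neighborFinset v) := by
      simp only [Finset.mem_sdiff, Finset.mem_insert, not_or]
      exact ⟨mem_of_adj hadjap, hpv, fun h => hpNv h⟩
    have hq' : q ∈ G.neighborFinset a \ insert v (G.neighborFinset v) := by
      simp only [Finset.mem_sdiff, Finset.mem_insert, not_or]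
      exact ⟨mem_of_adj hadjaq, hqv, fun h => hqNv h⟩
    rw [hteq] at hp' hq'
    simp only [Finset.mem_singleton] at hp' hq'
    rw [hp', hq']
  subst hpq
  -- now p is adjacent to a, b, x, y, e, f: N p = {x, y, a, b, e, f}
  have hsubNp : ({x, y, a, b, e, f} : Finset V) ⊆ G.neighborFinset p := by
    intro t ht
    simp only [Finset.mem_insert, Finset.mem_singleton] at ht
    rcases ht with rfl | rfl | rfl | rfl | rfl | rfl
    · exact mem_of_adj hadjxp.symm
    · exact mem_of_adj hadjyp.symm
    · exact mem_of_adj hadjap.symm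
    · exact mem_of_adj hadjbp.symm
    · exact mem_symm hpe
    · exact mem_symm hqf
  have hNp : G.neighborFinset p = {x, y, a, b, e, f} :=
    (Finset.eq_of_subset_of_card_le hsubNp (by rw [hdeg6 p, hcardNv])).symm
  -- outside neighbours of x : p and one more r
  have hout2x : (G.neighborFinset x \ insert v (G.neighborFinset v)).card = 2 := by
    rw [out_card (hdeg6 v) (hdeg6 x) hx, hcx2]
  have hpoutx : p ∈ G.neighborFinset x \ insert v (G.neighborFinset v) := by
    simp only [Finset.mem_sdiff, Finset.mem_insert, not_or]
    exact ⟨mem_of_adj hadjxp, hpv, fun h => hpNv h⟩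
  obtain ⟨r, hrp, hoxeq⟩ := pair_other hout2x hpoutx
  obtain ⟨hrx, hrv, hrNv⟩ := out_facts (hoxeq ▸ (by simp : r ∈ ({p, r} : Finset V)) :
    r ∈ G.neighborFinset x \ insert v (G.neighborFinset v))
  have hnvr : ¬ G.Adj v r := nadj_of_not_mem hrNv
  have hra : r ≠ a := fun h => hrNv (h ▸ hav)
  have hrb : r ≠ b := fun h => hrNv (h ▸ hbv)
  have hre : r ≠ e := fun h => hrNv (h ▸ hev)
  have hrf : r ≠ f := fun h => hrNv (h ▸ hfv)
  have hry : r ≠ y := fun h => hrNv (h ▸ hy)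
  have hrxne : r ≠ x := ne_of_mem_of_not_mem hrx (not_mem_self x)
  have hpene : p ≠ e := ne_of_mem_of_not_mem hpe (not_mem_self e)
  -- ¬ Adj p r
  have hnpr : ¬ G.Adj p r := fun h => by
    have hm : r ∈ G.neighborFinset p := mem_of_adj h
    rw [hNp] at hm
    simp only [Finset.mem_insert, Finset.mem_singleton] at hm
    rcases hm with h' | h' | h' | h' | h' | h'
    · exact hrxne h'
    · exact hry h'
    · exact hra h'
    · exact hrb h'
    · exact hre h'
    · exact hrf h'
  -- N x = {v, b, e, f, p, r}
  have hbxne : b ≠ x := hbx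
  have hsubNx : ({v, b, e, f, p, r} : Finset V) ⊆ G.neighborFinset x := by
    intro t ht
    simp only [Finset.mem_insert, Finset.mem_singleton] at ht
    rcases ht with rfl | rfl | rfl | rfl | rfl | rfl
    · exact mem_symm hx
    · exact mem_of_adj hadjxb
    · exact mem_of_adj hadjxe
    · exact mem_of_adj hadjxf
    · exact mem_of_adj hadjxp
    · exact hrx
  have hcardNx : ({v, b, e, f, p, r} : Finset V).card = 6 := by
    rw [Finset.card_insert_of_notMem (by simp [Ne.symm hbvne, Ne.symm hevne, Ne.symm hfvne, Ne.symm hpv, Ne.symm hrv]),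
      Finset.card_insert_of_notMem (by simp [Ne.symm heb, Ne.symm hfb, Ne.symm hpb, Ne.symm hrb]),
      Finset.card_insert_of_notMem (by simp [hef, Ne.symm hpene, Ne.symm hre]),
      Finset.card_insert_of_notMem (by simp [Ne.symm hpf, Ne.symm hrf]),
      Finset.card_insert_of_notMem (by simp [Ne.symm hrp]), Finset.card_singleton]
  have hNx : G.neighborFinset x = {v, b, e, f, p, r} :=
    (Finset.eq_of_subset_of_card_le hsubNx (by rw [hdeg6 x, hcardNx])).symm
  -- forcing at x
  have hvNx : v ∈ G.neighborFinset x := mem_symm hx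
  have hbNx : b ∈ G.neighborFinset x := mem_of_adj hadjxb
  have heNx : e ∈ G.neighborFinset x := mem_of_adj hadjxe
  have hfNx : f ∈ G.neighborFinset x := mem_of_adj hadjxf
  have hpNx : p ∈ G.neighborFinset x := mem_of_adj hadjxp
  have hsumx : cc G x v + cc G x b + cc G x e + cc G x f + cc G x p + cc G x r = 8 := by
    have h := hsum8 x
    rw [hNx,
      Finset.sum_insert (by simp [Ne.symm hbvne, Ne.symm hevne, Ne.symm hfvne, Ne.symm hpv, Ne.symm hrv]),
      Finset.sum_insert (by simp [Ne.symm heb, Ne.symm hfb, Ne.symm hpb, Ne.symm hrb]),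
      Finset.sum_insert (by simp [hef, Ne.symm hpene, Ne.symm hre]),
      Finset.sum_insert (by simp [Ne.symm hpf, Ne.symm hrf]),
      Finset.sum_insert (by simp [Ne.symm hrp]), Finset.sum_singleton] at h
    omega
  have bxv : 2 ≤ cc G x v := cc_ge2 hpNx hrx (Ne.symm hrp) hpv hrv hnvp hnvr
  have bxe : 1 ≤ cc G x e := cc_ge1 hfNx (Ne.symm hef) hnef
  have bxf : 1 ≤ cc G x f := cc_ge1 heNx hef (nadj_symm hnef)
  have bxp : 2 ≤ cc G x p := cc_ge2 hvNx hrx (Ne.symm hrv) (Ne.symm hpv) hrp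
    (nadj_symm hnvp) hnpr
  have bxr : 2 ≤ cc G x r := cc_ge2 hvNx hpNx (Ne.symm hpv) (Ne.symm hrv) (Ne.symm hrp)
    (nadj_symm hnvr) (nadj_symm hnpr)
  have hcxe : cc G x e = 1 := by omega
  have hadjer : G.Adj e r := adj_of_cc_one hcxe hfNx (Ne.symm hef) hnef hrx hre hrf
  have : r ∈ G.neighborFinset e := mem_of_adj hadjer
  rw [hNe] at this
  simp only [Finset.mem_insert, Finset.mem_singleton] at this
  rcases this with h' | h' | h' | h' | h' | h'
  · exact hrv h'
  · exact hrxne h'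
  · exact hry h'
  · exact hra h'
  · exact hrb h'
  · exact hrp h'

lemma caseB1 (hdeg6 : ∀ w : V, (G.neighborFinset w).card = 6)
    (hsum8 : ∀ w : V, ∑ x ∈ G.neighborFinset w, cc G w x = 8)
    {v x y : V} (hx : x ∈ G.neighborFinset v) (hy : y ∈ G.neighborFinset v) (hxy : x ≠ y)
    (hcx2 : cc G v x = 2) (hcy2 : cc G v y = 2)
    (hones : ∀ z ∈ G.neighborFinset v, z ≠ x → z ≠ y → cc G v z = 1)
    (hadjxy : G.Adj x y) : False := by
  -- the two non-neighbours a, b of x in N v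
  obtain ⟨a, b, hab, hfxeq⟩ := Finset.card_eq_two.1 (hcx2 :
    ((G.neighborFinset v).filter (fun t => t ≠ x ∧ ¬ G.Adj x t)).card = 2)
  have haf : a ∈ (G.neighborFinset v).filter (fun t => t ≠ x ∧ ¬ G.Adj x t) := by rw [hfxeq]; simp
  have hbf : b ∈ (G.neighborFinset v).filter (fun t => t ≠ x ∧ ¬ G.Adj x t) := by rw [hfxeq]; simp
  obtain ⟨hav, hax, hnxa⟩ : a ∈ G.neighborFinset v ∧ a ≠ x ∧ ¬ G.Adj x a := by simpa using haf
  obtain ⟨hbv, hbx, hnxb⟩ : b ∈ G.neighborFinset v ∧ b ≠ x ∧ ¬ G.Adj x b := by simpa using hbf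
  have hay : a ≠ y := by rintro rfl; exact hnxa hadjxy
  have hby : b ≠ y := by rintro rfl; exact hnxb hadjxy
  -- the two non-neighbours d, f of y in N v
  obtain ⟨d, f, hdf, hfyeq⟩ := Finset.card_eq_two.1 (hcy2 :
    ((G.neighborFinset v).filter (fun t => t ≠ y ∧ ¬ G.Adj y t)).card = 2)
  have hdfm : d ∈ (G.neighborFinset v).filter (fun t => t ≠ y ∧ ¬ G.Adj y t) := by rw [hfyeq]; simp
  have hffm : f ∈ (G.neighborFinset v).filter (fun t => t ≠ y ∧ ¬ G.Adj y t) := by rw [hfyeq]; simp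
  obtain ⟨hdv, hdy, hnyd⟩ : d ∈ G.neighborFinset v ∧ d ≠ y ∧ ¬ G.Adj y d := by simpa using hdfm
  obtain ⟨hfv, hfy, hnyf⟩ : f ∈ G.neighborFinset v ∧ f ≠ y ∧ ¬ G.Adj y f := by simpa using hffm
  have hdx : d ≠ x := by rintro rfl; exact hnyd hadjxy.symm
  have hfx : f ≠ x := by rintro rfl; exact hnyf hadjxy.symm
  -- cc = 1 facts
  have hca1 : cc G v a = 1 := hones a hav hax hay
  have hcb1 : cc G v b = 1 := hones b hbv hbx hby
  have hcd1 : cc G v d = 1 := hones d hdv hdx hdy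
  have hcf1 : cc G v f = 1 := hones f hfv hfx hfy
  -- d,f distinct from a,b
  have hda : d ≠ a := by
    rintro rfl
    have := cc_ge2 hx hy hxy (Ne.symm hax) (Ne.symm hdy) (nadj_symm hnxa) (nadj_symm hnyd)
    omega
  have hdb : d ≠ b := by
    rintro rfl
    have := cc_ge2 hx hy hxy (Ne.symm hbx) (Ne.symm hdy) (nadj_symm hnxb) (nadj_symm hnyd)
    omega
  have hfa : f ≠ a := by
    rintro rfl
    have := cc_ge2 hx hy hxy (Ne.symm hax) (Ne.symm hfy) (nadj_symm hnxa) (nadj_symm hnyf)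
    omega
  have hfb : f ≠ b := by
    rintro rfl
    have := cc_ge2 hx hy hxy (Ne.symm hbx) (Ne.symm hfy) (nadj_symm hnxb) (nadj_symm hnyf)
    omega
  -- adjacency helpers
  have hadjx : ∀ z ∈ G.neighborFinset v, z ≠ x → z ≠ a → z ≠ b → G.Adj x z := by
    intro z hz h1 h2 h3
    by_contra h
    have : z ∈ (G.neighborFinset v).filter (fun t => t ≠ x ∧ ¬ G.Adj x t) :=
      Finset.mem_filter.2 ⟨hz, h1, h⟩
    rw [hfxeq] at this
    simp only [Finset.mem_insert, Finset.mem_singleton] at this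
    tauto
  have hadjy : ∀ z ∈ G.neighborFinset v, z ≠ y → z ≠ d → z ≠ f → G.Adj y z := by
    intro z hz h1 h2 h3
    by_contra h
    have : z ∈ (G.neighborFinset v).filter (fun t => t ≠ y ∧ ¬ G.Adj y t) :=
      Finset.mem_filter.2 ⟨hz, h1, h⟩
    rw [hfyeq] at this
    simp only [Finset.mem_insert, Finset.mem_singleton] at this
    tauto
  have hnax : ¬ G.Adj a x := nadj_symm hnxa
  have hnbx : ¬ G.Adj b x := nadj_symm hnxb
  have hndy : ¬ G.Adj d y := nadj_symm hnyd
  have hnfy : ¬ G.Adj f y := nadj_symm hnyf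
  have hadja : ∀ z ∈ G.neighborFinset v, z ≠ a → z ≠ x → G.Adj a z :=
    fun z hz h1 h2 => adj_of_cc_one hca1 hx (Ne.symm hax) hnax hz h1 h2
  have hadjb : ∀ z ∈ G.neighborFinset v, z ≠ b → z ≠ x → G.Adj b z :=
    fun z hz h1 h2 => adj_of_cc_one hcb1 hx (Ne.symm hbx) hnbx hz h1 h2
  have hadjd : ∀ z ∈ G.neighborFinset v, z ≠ d → z ≠ y → G.Adj d z :=
    fun z hz h1 h2 => adj_of_cc_one hcd1 hy (Ne.symm hdy) hndy hz h1 h2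
  have hadjf : ∀ z ∈ G.neighborFinset v, z ≠ f → z ≠ y → G.Adj f z :=
    fun z hz h1 h2 => adj_of_cc_one hcf1 hy (Ne.symm hfy) hnfy hz h1 h2
  -- N v = {x, y, a, b, d, f}
  have hsubNv : ({x, y, a, b, d, f} : Finset V) ⊆ G.neighborFinset v := by
    intro t ht
    simp only [Finset.mem_insert, Finset.mem_singleton] at ht
    rcases ht with rfl | rfl | rfl | rfl | rfl | rfl <;> assumption
  have hcardNv : ({x, y, a, b, d, f} : Finset V).card = 6 := by
    rw [Finset.card_insert_of_notMem (by simp [hxy, Ne.symm hax, Ne.symm hbx, Ne.symm hdx, Ne.symm hfx]),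
      Finset.card_insert_of_notMem (by simp [Ne.symm hay, Ne.symm hby, Ne.symm hdy, Ne.symm hfy]),
      Finset.card_insert_of_notMem (by simp [hab, Ne.symm hda, Ne.symm hfa]),
      Finset.card_insert_of_notMem (by simp [Ne.symm hdb, Ne.symm hfb]),
      Finset.card_insert_of_notMem (by simp [hdf]), Finset.card_singleton]
  have hNv : G.neighborFinset v = {x, y, a, b, d, f} :=
    (Finset.eq_of_subset_of_card_le hsubNv (by rw [hdeg6 v, hcardNv])).symm
  -- adjacencies
  have hadjxd : G.Adj x d := hadjx d hdv hdx hda hdb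
  have hadjxf : G.Adj x f := hadjx f hfv hfx hfa hfb
  have hadjya : G.Adj y a := hadjy a hav hay (Ne.symm hda) (Ne.symm hfa)
  have hadjyb : G.Adj y b := hadjy b hbv hby (Ne.symm hdb) (Ne.symm hfb)
  -- outside neighbours of x
  have hout2x : (G.neighborFinset x \ insert v (G.neighborFinset v)).card = 2 := by
    rw [out_card (hdeg6 v) (hdeg6 x) hx, hcx2]
  obtain ⟨p1, p2, hp12, hoxeq⟩ := Finset.card_eq_two.1 hout2x
  obtain ⟨hp1x, hp1v, hp1Nv⟩ := out_facts (hoxeq ▸ (by simp : p1 ∈ ({p1, p2} : Finset V)) :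
    p1 ∈ G.neighborFinset x \ insert v (G.neighborFinset v))
  obtain ⟨hp2x, hp2v, hp2Nv⟩ := out_facts (hoxeq ▸ (by simp : p2 ∈ ({p1, p2} : Finset V)) :
    p2 ∈ G.neighborFinset x \ insert v (G.neighborFinset v))
  have hnvp1 : ¬ G.Adj v p1 := nadj_of_not_mem hp1Nv
  have hnvp2 : ¬ G.Adj v p2 := nadj_of_not_mem hp2Nv
  have hp1y : p1 ≠ y := fun h => hp1Nv (h ▸ hy)
  have hp2y : p2 ≠ y := fun h => hp2Nv (h ▸ hy)
  have hp1a : p1 ≠ a := fun h => hp1Nv (h ▸ hav)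
  have hp2a : p2 ≠ a := fun h => hp2Nv (h ▸ hav)
  have hp1b : p1 ≠ b := fun h => hp1Nv (h ▸ hbv)
  have hp2b : p2 ≠ b := fun h => hp2Nv (h ▸ hbv)
  have hp1d : p1 ≠ d := fun h => hp1Nv (h ▸ hdv)
  have hp2d : p2 ≠ d := fun h => hp2Nv (h ▸ hdv)
  have hp1f : p1 ≠ f := fun h => hp1Nv (h ▸ hfv)
  have hp2f : p2 ≠ f := fun h => hp2Nv (h ▸ hfv)
  -- N x = {v, y, d, f, p1, p2}
  have hyvne : y ≠ v := ne_of_mem_of_not_mem hy (not_mem_self v)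
  have hdvne : d ≠ v := ne_of_mem_of_not_mem hdv (not_mem_self v)
  have hfvne : f ≠ v := ne_of_mem_of_not_mem hfv (not_mem_self v)
  have havne : a ≠ v := ne_of_mem_of_not_mem hav (not_mem_self v)
  have hbvne : b ≠ v := ne_of_mem_of_not_mem hbv (not_mem_self v)
  have hxvne : x ≠ v := ne_of_mem_of_not_mem hx (not_mem_self v)
  have hsubNx : ({v, y, d, f, p1, p2} : Finset V) ⊆ G.neighborFinset x := by
    intro t ht
    simp only [Finset.mem_insert, Finset.mem_singleton] at ht
    rcases ht with rfl | rfl | rfl | rfl | rfl | rfl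
    · exact mem_symm hx
    · exact mem_of_adj hadjxy
    · exact mem_of_adj hadjxd
    · exact mem_of_adj hadjxf
    · exact hp1x
    · exact hp2x
  have hcardNx : ({v, y, d, f, p1, p2} : Finset V).card = 6 := by
    rw [Finset.card_insert_of_notMem (by simp [Ne.symm hyvne, Ne.symm hdvne, Ne.symm hfvne, Ne.symm hp1v, Ne.symm hp2v]),
      Finset.card_insert_of_notMem (by simp [Ne.symm hdy, Ne.symm hfy, Ne.symm hp1y, Ne.symm hp2y]),
      Finset.card_insert_of_notMem (by simp [hdf, Ne.symm hp1d, Ne.symm hp2d]),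
      Finset.card_insert_of_notMem (by simp [Ne.symm hp1f, Ne.symm hp2f]),
      Finset.card_insert_of_notMem (by simp [hp12]), Finset.card_singleton]
  have hNx : G.neighborFinset x = {v, y, d, f, p1, p2} :=
    (Finset.eq_of_subset_of_card_le hsubNx (by rw [hdeg6 x, hcardNx])).symm
  -- forcing at x
  have hvNx : v ∈ G.neighborFinset x := mem_symm hx
  have hyNx : y ∈ G.neighborFinset x := mem_of_adj hadjxy
  have hdNx : d ∈ G.neighborFinset x := mem_of_adj hadjxd
  have hfNx : f ∈ G.neighborFinset x := mem_of_adj hadjxf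
  have hsumx : cc G x v + cc G x y + cc G x d + cc G x f + cc G x p1 + cc G x p2 = 8 := by
    have h := hsum8 x
    rw [hNx,
      Finset.sum_insert (by simp [Ne.symm hyvne, Ne.symm hdvne, Ne.symm hfvne, Ne.symm hp1v, Ne.symm hp2v]),
      Finset.sum_insert (by simp [Ne.symm hdy, Ne.symm hfy, Ne.symm hp1y, Ne.symm hp2y]),
      Finset.sum_insert (by simp [hdf, Ne.symm hp1d, Ne.symm hp2d]),
      Finset.sum_insert (by simp [Ne.symm hp1f, Ne.symm hp2f]),
      Finset.sum_insert (by simp [hp12]), Finset.sum_singleton] at h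
    omega
  have bxv : 2 ≤ cc G x v := cc_ge2 hp1x hp2x hp12 hp1v hp2v hnvp1 hnvp2
  have bxy : 2 ≤ cc G x y := cc_ge2 hdNx hfNx hdf hdy hfy hnyd hnyf
  have bxd : 1 ≤ cc G x d := cc_ge1 hyNx (Ne.symm hdy) hndy
  have bxf : 1 ≤ cc G x f := cc_ge1 hyNx (Ne.symm hfy) hnfy
  have bxp1 : 1 ≤ cc G x p1 := cc_ge1 hvNx (Ne.symm hp1v) (nadj_symm hnvp1)
  have bxp2 : 1 ≤ cc G x p2 := cc_ge1 hvNx (Ne.symm hp2v) (nadj_symm hnvp2)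
  have hcxy : cc G x y = 2 := by omega
  have hcxd : cc G x d = 1 := by omega
  have hcxf : cc G x f = 1 := by omega
  have hcxp1 : cc G x p1 = 1 := by omega
  -- forced adjacencies
  have hadjyp1 : G.Adj y p1 := adj_of_cc_two hcxy hdNx hfNx hdf hdy hfy hnyd hnyf hp1x hp1y hp1d hp1f
  have hadjyp2 : G.Adj y p2 := adj_of_cc_two hcxy hdNx hfNx hdf hdy hfy hnyd hnyf hp2x hp2y hp2d hp2f
  have hadjdp1 : G.Adj d p1 := adj_of_cc_one hcxd hyNx (Ne.symm hdy) hndy hp1x hp1d hp1y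
  have hadjdp2 : G.Adj d p2 := adj_of_cc_one hcxd hyNx (Ne.symm hdy) hndy hp2x hp2d hp2y
  have hadjfp1 : G.Adj f p1 := adj_of_cc_one hcxf hyNx (Ne.symm hfy) hnfy hp1x hp1f hp1y
  have hadjfp2 : G.Adj f p2 := adj_of_cc_one hcxf hyNx (Ne.symm hfy) hnfy hp2x hp2f hp2y
  have hadjp1p2 : G.Adj p1 p2 := adj_of_cc_one hcxp1 hvNx (Ne.symm hp1v) (nadj_symm hnvp1)
    hp2x (Ne.symm hp12) hp2v
  -- N y = {v, x, a, b, p1, p2}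
  have hp1xne : p1 ≠ x := ne_of_mem_of_not_mem hp1x (not_mem_self x)
  have hp2xne : p2 ≠ x := ne_of_mem_of_not_mem hp2x (not_mem_self x)
  have hp1Ny : p1 ∈ G.neighborFinset y := mem_of_adj hadjyp1
  have hp2Ny : p2 ∈ G.neighborFinset y := mem_of_adj hadjyp2
  have hxNy : x ∈ G.neighborFinset y := mem_of_adj hadjxy.symm
  have haNy : a ∈ G.neighborFinset y := mem_of_adj hadjya
  have hbNy : b ∈ G.neighborFinset y := mem_of_adj hadjyb
  have hvNy : v ∈ G.neighborFinset y := mem_symm hy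
  have hsubNy : ({v, x, a, b, p1, p2} : Finset V) ⊆ G.neighborFinset y := by
    intro t ht
    simp only [Finset.mem_insert, Finset.mem_singleton] at ht
    rcases ht with rfl | rfl | rfl | rfl | rfl | rfl <;> assumption
  have hcardNy : ({v, x, a, b, p1, p2} : Finset V).card = 6 := by
    rw [Finset.card_insert_of_notMem (by simp [Ne.symm hxvne, Ne.symm havne, Ne.symm hbvne, Ne.symm hp1v, Ne.symm hp2v]),
      Finset.card_insert_of_notMem (by simp [Ne.symm hax, Ne.symm hbx, Ne.symm hp1xne, Ne.symm hp2xne]),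
      Finset.card_insert_of_notMem (by simp [hab, Ne.symm hp1a, Ne.symm hp2a]),
      Finset.card_insert_of_notMem (by simp [Ne.symm hp1b, Ne.symm hp2b]),
      Finset.card_insert_of_notMem (by simp [hp12]), Finset.card_singleton]
  have hNy : G.neighborFinset y = {v, x, a, b, p1, p2} :=
    (Finset.eq_of_subset_of_card_le hsubNy (by rw [hdeg6 y, hcardNy])).symm
  have hsumy : cc G y v + cc G y x + cc G y a + cc G y b + cc G y p1 + cc G y p2 = 8 := by
    have h := hsum8 y
    rw [hNy,
      Finset.sum_insert (by simp [Ne.symm hxvne, Ne.symm havne, Ne.symm hbvne, Ne.symm hp1v, Ne.symm hp2v]),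
      Finset.sum_insert (by simp [Ne.symm hax, Ne.symm hbx, Ne.symm hp1xne, Ne.symm hp2xne]),
      Finset.sum_insert (by simp [hab, Ne.symm hp1a, Ne.symm hp2a]),
      Finset.sum_insert (by simp [Ne.symm hp1b, Ne.symm hp2b]),
      Finset.sum_insert (by simp [hp12]), Finset.sum_singleton] at h
    omega
  have byv : 2 ≤ cc G y v := cc_ge2 hp1Ny hp2Ny hp12 hp1v hp2v hnvp1 hnvp2
  have byx : 2 ≤ cc G y x := cc_ge2 haNy hbNy hab hax hbx hnxa hnxb
  have bya : 1 ≤ cc G y a := cc_ge1 hxNy (Ne.symm hax) hnax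
  have byb : 1 ≤ cc G y b := cc_ge1 hxNy (Ne.symm hbx) hnbx
  have byp1 : 1 ≤ cc G y p1 := cc_ge1 hvNy (Ne.symm hp1v) (nadj_symm hnvp1)
  have byp2 : 1 ≤ cc G y p2 := cc_ge1 hvNy (Ne.symm hp2v) (nadj_symm hnvp2)
  have hcya : cc G y a = 1 := by omega
  have hcyb : cc G y b = 1 := by omega
  have hadjap1 : G.Adj a p1 := adj_of_cc_one hcya hxNy (Ne.symm hax) hnax hp1Ny hp1a hp1xne
  have hadjbp1 : G.Adj b p1 := adj_of_cc_one hcyb hxNy (Ne.symm hbx) hnbx hp1Ny hp1b hp1xne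
  -- final contradiction: p1 has 7 distinct neighbours
  have hsubNp1 : ({x, y, a, b, d, f, p2} : Finset V) ⊆ G.neighborFinset p1 := by
    intro t ht
    simp only [Finset.mem_insert, Finset.mem_singleton] at ht
    rcases ht with rfl | rfl | rfl | rfl | rfl | rfl | rfl
    · exact mem_symm hp1x
    · exact mem_of_adj hadjyp1.symm
    · exact mem_of_adj hadjap1.symm
    · exact mem_of_adj hadjbp1.symm
    · exact mem_of_adj hadjdp1.symm
    · exact mem_of_adj hadjfp1.symm
    · exact mem_of_adj hadjp1p2
  have hcard7 : ({x, y, a, b, d, f, p2} : Finset V).card = 7 := by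
    rw [Finset.card_insert_of_notMem (by simp [hxy, Ne.symm hax, Ne.symm hbx, Ne.symm hdx, Ne.symm hfx, Ne.symm hp2xne]),
      Finset.card_insert_of_notMem (by simp [Ne.symm hay, Ne.symm hby, Ne.symm hdy, Ne.symm hfy, Ne.symm hp2y]),
      Finset.card_insert_of_notMem (by simp [hab, Ne.symm hda, Ne.symm hfa, Ne.symm hp2a]),
      Finset.card_insert_of_notMem (by simp [Ne.symm hdb, Ne.symm hfb, Ne.symm hp2b]),
      Finset.card_insert_of_notMem (by simp [hdf, Ne.symm hp2d]),
      Finset.card_insert_of_notMem (by simp [Ne.symm hp2f]), Finset.card_singleton]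
  have := Finset.card_le_card hsubNp1
  rw [hcard7, hdeg6 p1] at this
  omega

lemma master (hdeg6 : ∀ w : V, (G.neighborFinset w).card = 6)
    (hsum8 : ∀ w : V, ∑ x ∈ G.neighborFinset w, cc G w x = 8) (v : V) : False := by
  by_cases h0 : ∃ u ∈ G.neighborFinset v, cc G v u = 0
  · obtain ⟨u, hu, hc⟩ := h0
    exact caseI hdeg6 hsum8 hu hc
  push_neg at h0
  have hpos : ∀ u ∈ G.neighborFinset v, 1 ≤ cc G v u :=
    fun u hu => Nat.one_le_iff_ne_zero.2 (h0 u hu)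
  by_cases hA : ∃ u ∈ G.neighborFinset v, 3 ≤ cc G v u
  · obtain ⟨u, hu, h3⟩ := hA
    have herase5 : ((G.neighborFinset v).erase u).card = 5 := by
      rw [Finset.card_erase_of_mem hu, hdeg6 v]
    have hsum_er := Finset.sum_erase_add (G.neighborFinset v) (cc G v) hu
    rw [hsum8 v] at hsum_er
    have hge : ((G.neighborFinset v).erase u).card • 1 ≤
        ∑ x ∈ (G.neighborFinset v).erase u, cc G v x :=
      Finset.card_nsmul_le_sum _ _ 1
        (fun x hx => hpos x (Finset.mem_erase.1 hx).2)
    rw [herase5, smul_eq_mul] at hge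
    have hcu3 : cc G v u = 3 := by omega
    have hones : ∀ z ∈ G.neighborFinset v, z ≠ u → cc G v z = 1 := by
      intro z hz hzu
      by_contra hne
      have h2 : 2 ≤ cc G v z := by
        have := hpos z hz
        omega
      have hz' : z ∈ (G.neighborFinset v).erase u := Finset.mem_erase.2 ⟨hzu, hz⟩
      have hsplit := Finset.sum_erase_add ((G.neighborFinset v).erase u) (cc G v) hz'
      have hge4 : (((G.neighborFinset v).erase u).erase z).card • 1 ≤
          ∑ x ∈ ((G.neighborFinset v).erase u).erase z, cc G v x :=
        Finset.card_nsmul_le_sum _ _ 1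
          (fun x hx => hpos x (Finset.mem_erase.1 (Finset.mem_erase.1 hx).2).2)
      rw [Finset.card_erase_of_mem hz', herase5, smul_eq_mul] at hge4
      omega
    exact caseA hdeg6 hsum8 hu hcu3 hones
  push_neg at hA
  obtain ⟨x, hx, hx2⟩ : ∃ x ∈ G.neighborFinset v, 2 ≤ cc G v x := by
    by_contra hall
    push_neg at hall
    have hle : ∑ t ∈ G.neighborFinset v, cc G v t ≤ (G.neighborFinset v).card • 1 :=
      Finset.sum_le_card_nsmul _ _ 1 (fun t ht => by have := hall t ht; omega)
    rw [hdeg6 v, smul_eq_mul, hsum8 v] at hle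
    omega
  have hcx2 : cc G v x = 2 := by
    have := hA x hx
    omega
  obtain ⟨y, hy', hy2⟩ : ∃ y ∈ (G.neighborFinset v).erase x, 2 ≤ cc G v y := by
    by_contra hall
    push_neg at hall
    have herase5 : ((G.neighborFinset v).erase x).card = 5 := by
      rw [Finset.card_erase_of_mem hx, hdeg6 v]
    have hle : ∑ t ∈ (G.neighborFinset v).erase x, cc G v t ≤
        ((G.neighborFinset v).erase x).card • 1 :=
      Finset.sum_le_card_nsmul _ _ 1 (fun t ht => by have := hall t ht; omega)
    have hsum_er := Finset.sum_erase_add (G.neighborFinset v) (cc G v) hx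
    rw [hsum8 v] at hsum_er
    rw [herase5, smul_eq_mul] at hle
    omega
  obtain ⟨hyx, hy⟩ := Finset.mem_erase.1 hy'
  have hcy2 : cc G v y = 2 := by
    have := hA y hy
    omega
  have hones : ∀ z ∈ G.neighborFinset v, z ≠ x → z ≠ y → cc G v z = 1 := by
    intro z hz hzx hzy
    by_contra hne
    have h2 : 2 ≤ cc G v z := by
      have := hpos z hz
      omega
    have hsum_x := Finset.sum_erase_add (G.neighborFinset v) (cc G v) hx
    rw [hsum8 v] at hsum_x
    have hsum_y := Finset.sum_erase_add ((G.neighborFinset v).erase x) (cc G v) hy'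
    have hz' : z ∈ ((G.neighborFinset v).erase x).erase y :=
      Finset.mem_erase.2 ⟨hzy, Finset.mem_erase.2 ⟨hzx, hz⟩⟩
    have hsum_z := Finset.sum_erase_add (((G.neighborFinset v).erase x).erase y) (cc G v) hz'
    have hge3 : ((((G.neighborFinset v).erase x).erase y).erase z).card • 1 ≤
        ∑ t ∈ (((G.neighborFinset v).erase x).erase y).erase z, cc G v t :=
      Finset.card_nsmul_le_sum _ _ 1 (fun t ht => hpos t
        (Finset.mem_erase.1 (Finset.mem_erase.1 (Finset.mem_erase.1 ht).2).2).2)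
    rw [Finset.card_erase_of_mem hz', Finset.card_erase_of_mem hy',
      Finset.card_erase_of_mem hx, hdeg6 v, smul_eq_mul] at hge3
    omega
  by_cases hadj : G.Adj x y
  · exact caseB1 hdeg6 hsum8 hx hy (Ne.symm hyx) hcx2 hcy2 hones hadj
  · exact caseB2 hdeg6 hsum8 hx hy (Ne.symm hyx) hcx2 hcy2 hones hadj

lemma sum_inter (v : V) (h11 : nbhdEdgeCount G v = 11) :
    ∑ u ∈ G.neighborFinset v, (G.neighborFinset u ∩ G.neighborFinset v).card = 22 := by
  classical
  set s := G.neighborSet v with hs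
  let H := SimpleGraph.induce s G
  have hadj : DecidableRel H.Adj := fun a b => (inferInstance : Decidable (G.Adj a b))
  have hcard : H.edgeFinset.card = 11 := by
    have : Nat.card H.edgeSet = 11 := h11
    rwa [Nat.card_eq_fintype_card, ← Set.toFinset_card] at this
  have hsum : ∑ u : s, H.degree u = 22 := by
    rw [SimpleGraph.sum_degrees_eq_twice_card_edges, hcard]
  have hdeg : ∀ u : s, H.degree u = (G.neighborFinset ↑u ∩ G.neighborFinset v).card := by
    intro u
    rw [SimpleGraph.degree]
    refine Finset.card_bij (fun a _ => (a : V)) ?_ ?_ ?_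
    · intro a ha
      simp only [mem_neighborFinset] at ha
      simp only [mem_inter, mem_neighborFinset]
      exact ⟨ha, a.2⟩
    · intro a _ b _ h
      exact Subtype.ext h
    · intro t ht
      simp only [mem_inter, mem_neighborFinset] at ht
      exact ⟨⟨t, ht.2⟩, by simp only [mem_neighborFinset]; exact ht.1, rfl⟩
  rw [Finset.sum_congr rfl (fun u _ => hdeg u)] at hsum
  rw [← hsum]
  exact Finset.sum_subtype _ (fun t => by simp [mem_neighborFinset, hs, SimpleGraph.mem_neighborSet]) _

end NoSixEleven


/-- No (6,11)-constant graph exists: there is no finite simple graph on a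
nonempty vertex set that is 6-regular and in which the subgraph induced by
the open neighbourhood of every vertex has exactly 11 edges. -/
theorem no_six_eleven_constant_graph :
    ¬ ∃ (V : Type) (_ : Fintype V) (_ : Nonempty V) (G : SimpleGraph V),
      (∀ v : V, Nat.card (G.neighborSet v) = 6) ∧
      (∀ v : V, nbhdEdgeCount G v = 11) := by
  rintro ⟨V, hF, hNE, G, h6, h11⟩
  letI := hF
  letI : DecidableEq V := Classical.decEq V
  letI : DecidableRel G.Adj := Classical.decRel _
  have hdeg6 : ∀ v : V, (G.neighborFinset v).card = 6 := by
    intro v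
    have h := h6 v
    rw [Nat.card_eq_fintype_card] at h
    rw [SimpleGraph.neighborFinset, Set.toFinset_card]
    exact h
  have hsum8 : ∀ v : V, ∑ u ∈ G.neighborFinset v, NoSixEleven.cc G v u = 8 := by
    intro v
    have h22 := NoSixEleven.sum_inter v (h11 v)
    have h30 : ∑ u ∈ G.neighborFinset v,
        ((G.neighborFinset u ∩ G.neighborFinset v).card + NoSixEleven.cc G v u) = 30 := by
      rw [Finset.sum_congr rfl (fun u hu => NoSixEleven.filter_partition (hdeg6 v) hu)]
      rw [Finset.sum_const, hdeg6 v, smul_eq_mul]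
    rw [Finset.sum_add_distrib, h22] at h30
    omega
  obtain ⟨v⟩ := hNE
  exact NoSixEleven.master hdeg6 hsum8 v
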